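/- arXiv:1707.08904 — 5 statements merged into one kernel-verified Lean document; each statement's English description precedes it below -/
import Mathlib

section
/- The function $x \mapsto \psi(2x) - \psi(x)$ is strictly decreasing on $(0, \infty)$. -/
open Real Set Filter Topology

/-- The digamma function `ψ = Γ'/Γ`, as the derivative of `log ∘ Γ` on `(0,∞)`. -/
noncomputable def digamma (x : ℝ) : ℝ := deriv (fun y => Real.log (Real.Gamma y)) x

namespace DigammaAux

lemma ne_neg_nat {x : ℝ} (hx : 0 < x) : ∀ m : ℕ, x ≠ -m :=
  fun m => ((neg_nonpos.mpr (Nat.cast_nonneg m)).trans_lt hx).ne'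

lemma diffL {x : ℝ} (hx : 0 < x) :
    DifferentiableAt ℝ (fun y => Real.log (Real.Gamma y)) x :=
  (Real.differentiableAt_Gamma (ne_neg_nat hx)).log (Real.Gamma_pos_of_pos hx).ne'

/-- The building block `log (x + c) - log (x + c + 1/2)`. -/
noncomputable def phi (c : ℝ) (x : ℝ) : ℝ := Real.log (x + c) - Real.log (x + c + 1/2)

lemma phi_hasDerivAt (c : ℝ) {x : ℝ} (hx : 0 < x) (hc : 0 ≤ c) :
    HasDerivAt (phi c) ((x + c)⁻¹ - (x + c + 1/2)⁻¹) x := by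
  have h1 : (0:ℝ) < x + c := by linarith
  have h2 : (0:ℝ) < x + c + 1/2 := by linarith
  have d1 : HasDerivAt (fun y : ℝ => Real.log (y + c)) (1 / (x + c)) x := by
    simpa using ((hasDerivAt_id x).add_const c).log h1.ne'
  have d2 : HasDerivAt (fun y : ℝ => Real.log (y + c + 1/2)) (1 / (x + c + 1/2)) x := by
    simpa using (((hasDerivAt_id x).add_const c).add_const (1/2)).log h2.ne'
  have hfun : phi c = fun x => Real.log (x + c) - Real.log (x + c + 1/2) := rfl
  rw [hfun]
  simpa [one_div, Pi.sub_def] using d1.sub d2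

lemma phi_strictConcaveOn (c : ℝ) (hc : 0 ≤ c) :
    StrictConcaveOn ℝ (Ioi (0:ℝ)) (phi c) := by
  apply strictConcaveOn_of_deriv2_neg (convex_Ioi 0)
  · intro x hx
    have h1 : (0:ℝ) < x + c := by have := mem_Ioi.mp hx; linarith
    have h2 : (0:ℝ) < x + c + 1/2 := by linarith
    exact ((((continuousAt_id.add continuousAt_const).log h1.ne').sub
      (((continuousAt_id.add continuousAt_const).add continuousAt_const).log
        h2.ne')).continuousWithinAt)
  · intro x hx
    rw [interior_Ioi] at hx
    have hx' : (0:ℝ) < x := hx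
    have h1 : (0:ℝ) < x + c := by linarith
    have h2 : (0:ℝ) < x + c + 1/2 := by linarith
    have hEq : Set.EqOn (deriv (phi c)) (fun y => (y + c)⁻¹ - (y + c + 1/2)⁻¹) (Ioi 0) :=
      fun y hy => (phi_hasDerivAt c (mem_Ioi.mp hy) hc).deriv
    have hev : deriv (phi c) =ᶠ[𝓝 x] fun y => (y + c)⁻¹ - (y + c + 1/2)⁻¹ :=
      Filter.eventuallyEq_of_mem (isOpen_Ioi.mem_nhds hx) hEq
    have : deriv^[2] (phi c) x = deriv (fun y => (y + c)⁻¹ - (y + c + 1/2)⁻¹) x := by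
      simp only [Function.iterate_succ, Function.iterate_zero, Function.comp_apply, id]
      exact hev.deriv_eq
    rw [this]
    have d1 : HasDerivAt (fun y : ℝ => (y + c)⁻¹) (-1 / (x + c) ^ 2) x := by
      simpa [Pi.inv_def] using ((hasDerivAt_id x).add_const c).inv h1.ne'
    have d2 : HasDerivAt (fun y : ℝ => (y + c + 1/2)⁻¹) (-1 / (x + c + 1/2) ^ 2) x := by
      simpa [Pi.inv_def] using (((hasDerivAt_id x).add_const c).add_const (1/2)).inv h2.ne'
    rw [(show HasDerivAt (fun y => (y + c)⁻¹ - (y + c + 1/2)⁻¹) _ x from d1.sub d2).deriv]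
    have hlt : 1 / (x + c + 1/2) ^ 2 < 1 / (x + c) ^ 2 := by
      apply one_div_lt_one_div_of_lt (by positivity)
      nlinarith
    have e1 : -1 / (x + c) ^ 2 = -(1 / (x + c) ^ 2) := by ring
    have e2 : -1 / (x + c + 1/2) ^ 2 = -(1 / (x + c + 1/2) ^ 2) := by ring
    rw [e1, e2]
    linarith

open Real.BohrMollerup in
lemma tendsto_aux {x : ℝ} (hx : 0 < x) :
    Tendsto (fun n : ℕ => (1/2 : ℝ) * Real.log n + ∑ m ∈ Finset.range (n + 1), phi m x)
      atTop (𝓝 (Real.log (Real.Gamma (x + 1/2)) - Real.log (Real.Gamma x))) := by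
  have h := (tendsto_log_gamma (by linarith : (0:ℝ) < x + 1/2)).sub (tendsto_log_gamma hx)
  convert h using 2 with n
  simp only [logGammaSeq, phi, Finset.sum_sub_distrib]
  have : ∑ m ∈ Finset.range (n + 1), Real.log (x + m + 1/2)
      = ∑ m ∈ Finset.range (n + 1), Real.log (x + 1/2 + m) := by
    refine Finset.sum_congr rfl fun m _ => by ring_nf
  rw [this]
  ring

/-- The tail `h - phi 0` is concave on `(0,∞)` as a pointwise limit of concave functions. -/
lemma tail_concaveOn :
    ConcaveOn ℝ (Ioi (0:ℝ))
      (fun x => (Real.log (Real.Gamma (x + 1/2)) - Real.log (Real.Gamma x)) - phi 0 x) := by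
  have hT : ∀ n : ℕ, ConcaveOn ℝ (Ioi (0:ℝ))
      (fun x => (1/2 : ℝ) * Real.log n + ∑ m ∈ Finset.range n, phi (m + 1) x) := by
    intro n
    apply ConcaveOn.add (concaveOn_const _ (convex_Ioi 0))
    induction n with
    | zero => simpa using concaveOn_const (0:ℝ) (convex_Ioi 0)
    | succ k ih =>
        simp only [Finset.sum_range_succ]
        exact ih.add (phi_strictConcaveOn (k + 1) (by positivity)).concaveOn
  have key : ∀ z : ℝ, 0 < z →
      Tendsto (fun n : ℕ => (1/2 : ℝ) * Real.log n + ∑ m ∈ Finset.range n, phi (m + 1) z)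
        atTop (𝓝 ((Real.log (Real.Gamma (z + 1/2)) - Real.log (Real.Gamma z)) - phi 0 z)) := by
    intro z hz
    have := (tendsto_aux hz).sub_const (phi 0 z)
    convert this using 2 with n
    rw [Finset.sum_range_succ']
    push_cast
    ring
  constructor
  · exact convex_Ioi 0
  · intro x hx y hy a b ha hb hab
    have hmem : a • x + b • y ∈ Ioi (0:ℝ) := (convex_Ioi 0) hx hy ha hb hab
    refine le_of_tendsto_of_tendsto'
      (((key x (mem_Ioi.mp hx)).const_mul a).add ((key y (mem_Ioi.mp hy)).const_mul b))
      (key _ (mem_Ioi.mp hmem)) fun n => ?_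
    have := (hT n).2 hx hy ha hb hab
    simpa [smul_eq_mul] using this

lemma h_strictConcaveOn :
    StrictConcaveOn ℝ (Ioi (0:ℝ))
      (fun x => Real.log (Real.Gamma (x + 1/2)) - Real.log (Real.Gamma x)) := by
  have := tail_concaveOn.add_strictConcaveOn (phi_strictConcaveOn 0 le_rfl)
  convert this using 2 with x
  · rfl
  ring_nf
  simp [phi]

lemma const_mul_strictConcaveOn {f : ℝ → ℝ} {s : Set ℝ} (hf : StrictConcaveOn ℝ s f)
    {c : ℝ} (hc : 0 < c) : StrictConcaveOn ℝ s (fun x => c * f x) := by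
  refine ⟨hf.1, fun x hx y hy hxy a b ha hb hab => ?_⟩
  have := hf.2 hx hy hxy ha hb hab
  simp only [smul_eq_mul] at this ⊢
  nlinarith

lemma affine_concaveOn (l C : ℝ) : ConcaveOn ℝ (Ioi (0:ℝ)) (fun x => x * l + C) := by
  refine ⟨convex_Ioi 0, fun x _ y _ a b _ _ hab => le_of_eq ?_⟩
  simp only [smul_eq_mul]
  linear_combination C * hab

lemma g_strictConcaveOn :
    StrictConcaveOn ℝ (Ioi (0:ℝ))
      (fun y => (1/2 : ℝ) * Real.log (Real.Gamma (2 * y)) - Real.log (Real.Gamma y)) := by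
  have key : StrictConcaveOn ℝ (Ioi (0:ℝ))
      (fun y => (y * Real.log 2 + (-(1/2) * Real.log 2 - (1/2) * Real.log (Real.sqrt π)))
        + (1/2 : ℝ) * (Real.log (Real.Gamma (y + 1/2)) - Real.log (Real.Gamma y))) :=
    (affine_concaveOn _ _).add_strictConcaveOn
      (const_mul_strictConcaveOn h_strictConcaveOn one_half_pos)
  refine ⟨key.1, fun x hx y hy hxy a b ha hb hab => ?_⟩
  have hmem : a • x + b • y ∈ Ioi (0:ℝ) := (convex_Ioi 0) hx hy ha.le hb.le hab
  have hEq : ∀ z : ℝ, 0 < z →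
      (1/2 : ℝ) * Real.log (Real.Gamma (2 * z)) - Real.log (Real.Gamma z)
      = (z * Real.log 2 + (-(1/2) * Real.log 2 - (1/2) * Real.log (Real.sqrt π)))
        + (1/2 : ℝ) * (Real.log (Real.Gamma (z + 1/2)) - Real.log (Real.Gamma z)) := by
    intro z hz
    have hG1 : (0:ℝ) < Real.Gamma z := Real.Gamma_pos_of_pos hz
    have hG2 : (0:ℝ) < Real.Gamma (z + 1/2) := Real.Gamma_pos_of_pos (by linarith)
    have hG3 : (0:ℝ) < Real.Gamma (2 * z) := Real.Gamma_pos_of_pos (by linarith)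
    have hsq : (0:ℝ) < Real.sqrt π := Real.sqrt_pos.mpr Real.pi_pos
    have hdup := Real.Gamma_mul_Gamma_add_half z
    have hlog := congrArg Real.log hdup
    rw [Real.log_mul hG1.ne' hG2.ne',
      Real.log_mul (by positivity) hsq.ne',
      Real.log_mul hG3.ne' (by positivity),
      Real.log_rpow (by norm_num)] at hlog
    linarith
  dsimp only
  rw [hEq x (mem_Ioi.mp hx), hEq y (mem_Ioi.mp hy), hEq _ (mem_Ioi.mp hmem)]
  exact key.2 hx hy hxy ha hb hab

lemma g_hasDerivAt {x : ℝ} (hx : 0 < x) :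
    HasDerivAt (fun y => (1/2 : ℝ) * Real.log (Real.Gamma (2 * y)) - Real.log (Real.Gamma y))
      (digamma (2 * x) - digamma x) x := by
  have h2x : (0:ℝ) < 2 * x := by linarith
  have dL : HasDerivAt (fun y => Real.log (Real.Gamma y)) (digamma (2 * x)) (2 * x) :=
    (diffL h2x).hasDerivAt
  have dmul : HasDerivAt (fun y : ℝ => 2 * y) 2 x := by
    simpa using (hasDerivAt_id x).const_mul (2:ℝ)
  have dcomp : HasDerivAt (fun y : ℝ => Real.log (Real.Gamma (2 * y)))
      (digamma (2 * x) * 2) x := dL.comp x dmul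
  have dL2 : HasDerivAt (fun y => Real.log (Real.Gamma y)) (digamma x) x :=
    (diffL hx).hasDerivAt
  have := (show HasDerivAt
    (fun y => (1/2 : ℝ) * Real.log (Real.Gamma (2 * y)) - Real.log (Real.Gamma y)) _ x from
    (dcomp.const_mul (1/2 : ℝ)).sub dL2)
  convert this using 1
  ring

end DigammaAux

theorem digamma_two_x_sub_strictAnti :
    StrictAntiOn (fun x => digamma (2 * x) - digamma x) (Set.Ioi (0:ℝ)) := by
  intro a ha b hb hab
  have hanti := DigammaAux.g_strictConcaveOn.strictAntiOn_deriv
    (fun x hx => (DigammaAux.g_hasDerivAt (Set.mem_Ioi.mp hx)).differentiableAt)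
  have := hanti ha hb hab
  rwa [(DigammaAux.g_hasDerivAt (Set.mem_Ioi.mp ha)).deriv,
    (DigammaAux.g_hasDerivAt (Set.mem_Ioi.mp hb)).deriv] at this
end

section
/- The range of the function $x \mapsto \psi(2x) - \psi(x)$ on $(0, \infty)$ is the open interval $(\ln 2, \infty)$; in particular, $\psi(2x) - \psi(x) > \ln 2$ for every $x > 0$, and for every $M > \ln 2$ there exists a unique $x > 0$ with $\psi(2x) - \psi(x) = M$. -/
open Real Set Filter Topology


lemma ne_neg_nat {x : ℝ} (hx : 0 < x) : ∀ m : ℕ, x ≠ -m :=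
  fun m => ne_of_gt (lt_of_le_of_lt (neg_nonpos.mpr (Nat.cast_nonneg m)) hx)

lemma diffAt_logGamma {x : ℝ} (hx : 0 < x) :
    DifferentiableAt ℝ (fun y => Real.log (Real.Gamma y)) x :=
  (Real.differentiableAt_Gamma (ne_neg_nat hx)).log (Real.Gamma_pos_of_pos hx).ne'

lemma hasDerivAt_logGamma {x : ℝ} (hx : 0 < x) :
    HasDerivAt (fun y => Real.log (Real.Gamma y)) (digamma x) x :=
  (diffAt_logGamma hx).hasDerivAt

lemma digamma_add_one {x : ℝ} (hx : 0 < x) : digamma (x + 1) = digamma x + 1 / x := by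
  have h1 : HasDerivAt (fun y => Real.log (Real.Gamma (y + 1))) (digamma (x + 1)) x := by
    simpa [Function.comp_def] using (hasDerivAt_logGamma (by linarith : (0:ℝ) < x + 1)).comp x
      ((hasDerivAt_id x).add_const 1)
  have h2 : HasDerivAt (fun y => Real.log (Real.Gamma y) + Real.log y)
      (digamma x + 1 / x) x := by
    simpa [one_div, Pi.add_def] using (hasDerivAt_logGamma hx).add (Real.hasDerivAt_log hx.ne')
  have heq : (fun y => Real.log (Real.Gamma (y + 1)))
      =ᶠ[𝓝 x] fun y => Real.log (Real.Gamma y) + Real.log y := by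
    filter_upwards [eventually_gt_nhds hx] with y hy
    rw [Real.Gamma_add_one hy.ne', Real.log_mul hy.ne' (Real.Gamma_pos_of_pos hy).ne', add_comm]
  exact (h1.congr_of_eventuallyEq heq.symm).unique h2

lemma digamma_mono : MonotoneOn digamma (Set.Ioi (0:ℝ)) := by
  have := Real.convexOn_log_Gamma.monotoneOn_deriv
    (fun x hx => diffAt_logGamma (Set.mem_Ioi.mp hx))
  convert this using 1
  rfl

lemma digamma_le {x y : ℝ} (hx : 0 < x) (hxy : x ≤ y) : digamma x ≤ digamma y :=
  digamma_mono (Set.mem_Ioi.mpr hx) (Set.mem_Ioi.mpr (lt_of_lt_of_le hx hxy)) hxy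

lemma digamma_dup {x : ℝ} (hx : 0 < x) :
    digamma x + digamma (x + 1 / 2) = 2 * digamma (2 * x) - 2 * Real.log 2 := by
  have h1 : HasDerivAt (fun y => Real.log (Real.Gamma y) + Real.log (Real.Gamma (y + 1 / 2)))
      (digamma x + digamma (x + 1 / 2)) x := by
    have h := (hasDerivAt_logGamma (by linarith : (0:ℝ) < x + 1 / 2)).comp x
      ((hasDerivAt_id x).add_const (1/2))
    simpa [Function.comp_def, Pi.add_def] using (hasDerivAt_logGamma hx).add h
  have hm : HasDerivAt (fun y : ℝ => 2 * y) 2 x := by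
    simpa using (hasDerivAt_id x).const_mul (2:ℝ)
  have ha : HasDerivAt (fun y : ℝ => Real.log (Real.Gamma (2 * y))) (digamma (2 * x) * 2) x :=
    (hasDerivAt_logGamma (by linarith : (0:ℝ) < 2 * x)).comp x hm
  have hb : HasDerivAt (fun y : ℝ => (1 - 2 * y) * Real.log 2) ((0 - 2) * Real.log 2) x :=
    ((hasDerivAt_const x (1:ℝ)).sub hm).mul_const (Real.log 2)
  have h2 : HasDerivAt (fun y => Real.log (Real.Gamma (2 * y)) + (1 - 2 * y) * Real.log 2
      + Real.log (Real.sqrt Real.pi)) (2 * digamma (2 * x) - 2 * Real.log 2) x := by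
    have h := (ha.add hb).add_const (Real.log (Real.sqrt Real.pi))
    exact h.congr_deriv (by ring)
  have heq : (fun y => Real.log (Real.Gamma y) + Real.log (Real.Gamma (y + 1 / 2)))
      =ᶠ[𝓝 x] (fun y => Real.log (Real.Gamma (2 * y)) + (1 - 2 * y) * Real.log 2
      + Real.log (Real.sqrt Real.pi)) := by
    filter_upwards [eventually_gt_nhds hx] with y hy
    have h2y : (0:ℝ) < 2 * y := by linarith
    have hlog := congrArg Real.log (Real.Gamma_mul_Gamma_add_half y)
    rw [Real.log_mul (Real.Gamma_pos_of_pos hy).ne'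
        (Real.Gamma_pos_of_pos (by linarith : (0:ℝ) < y + 1/2)).ne'] at hlog
    rw [Real.log_mul (by positivity) (Real.sqrt_pos.mpr Real.pi_pos).ne',
        Real.log_mul (Real.Gamma_pos_of_pos h2y).ne' (by positivity),
        Real.log_rpow (by norm_num : (0:ℝ) < 2)] at hlog
    rw [hlog]
  exact (h1.congr_of_eventuallyEq heq.symm).unique h2

noncomputable def Dg (x : ℝ) : ℝ := digamma (x + 1 / 2) - digamma x

lemma Dg_nonneg {x : ℝ} (hx : 0 < x) : 0 ≤ Dg x :=
  sub_nonneg.mpr (digamma_le hx (by linarith))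

lemma Dg_le {x : ℝ} (hx : 0 < x) : Dg x ≤ 1 / x := by
  have h1 : Dg x + Dg (x + 1/2) = 1 / x := by
    have := digamma_add_one hx
    have e : x + 1/2 + 1/2 = x + 1 := by ring
    simp only [Dg, e, this]
    ring
  have := Dg_nonneg (by linarith : (0:ℝ) < x + 1/2)
  linarith

lemma Dg_rec {x : ℝ} (hx : 0 < x) : Dg x = (1/x - 1/(x + 1/2)) + Dg (x + 1) := by
  have h1 := digamma_add_one hx
  have h2 := digamma_add_one (by linarith : (0:ℝ) < x + 1/2)
  have e1 : x + 1/2 + 1 = x + 1 + 1/2 := by ring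
  rw [e1] at h2
  simp only [Dg, h1, h2]
  ring

lemma t0_anti {u v : ℝ} (hu : 0 < u) (huv : u < v) :
    1/v - 1/(v + 1/2) < 1/u - 1/(u + 1/2) := by
  have hv : 0 < v := hu.trans huv
  have eu : 1/u - 1/(u + 1/2) = (1/2) / (u * (u + 1/2)) := by
    field_simp
    ring
  have ev : 1/v - 1/(v + 1/2) = (1/2) / (v * (v + 1/2)) := by
    field_simp
    ring
  rw [eu, ev]
  apply div_lt_div_of_pos_left (by norm_num) (by positivity)
  nlinarith

lemma Dg_telescope {a b : ℝ} (ha : 0 < a) (hab : a < b) (n : ℕ) :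
    (1/a - 1/(a + 1/2)) - (1/b - 1/(b + 1/2)) + (Dg (a + (n+1)) - Dg (b + (n+1)))
      ≤ Dg a - Dg b := by
  induction n with
  | zero =>
      have h1 := Dg_rec ha
      have h2 := Dg_rec (ha.trans hab)
      push_cast
      rw [h1, h2]
      ring_nf
      norm_num
  | succ n ih =>
      refine le_trans ?_ ih
      have h1 := Dg_rec (by have : (0:ℝ) ≤ (n:ℝ) := Nat.cast_nonneg n; push_cast; linarith : (0:ℝ) < a + (n+1))
      have h2 := Dg_rec (by have : (0:ℝ) ≤ (n:ℝ) := Nat.cast_nonneg n; push_cast; linarith : (0:ℝ) < b + (n+1))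
      have h3 : 1/(b + (n+1)) - 1/(b + (n+1) + 1/2) ≤ 1/(a + (n+1)) - 1/(a + (n+1) + 1/2) :=
        le_of_lt (t0_anti (by positivity) (by linarith))
      have ea : a + (n+1) + 1 = a + (↑(n+1) + 1) := by push_cast; ring
      have eb : b + (n+1) + 1 = b + (↑(n+1) + 1) := by push_cast; ring
      rw [ea] at h1
      rw [eb] at h2
      push_cast at h1 h2 ⊢
      linarith

lemma Dg_strictAnti {a b : ℝ} (ha : 0 < a) (hab : a < b) : Dg b < Dg a := by
  set c := (1/a - 1/(a + 1/2)) - (1/b - 1/(b + 1/2)) with hc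
  have hcpos : 0 < c := sub_pos.mpr (t0_anti ha hab)
  obtain ⟨n, hn⟩ := exists_nat_gt (1/c)
  have hb : 0 < b := ha.trans hab
  have key := Dg_telescope ha hab n
  have hn0 : (0:ℝ) ≤ (n:ℝ) := Nat.cast_nonneg n
  have h1 : 0 ≤ Dg (a + (n+1)) := Dg_nonneg (by push_cast; linarith)
  have h2 : Dg (b + (n+1)) ≤ 1 / (b + (n+1)) := Dg_le (by push_cast; linarith)
  have h3 : 1 / (b + (n+1)) < c := by
    rw [div_lt_iff₀ (by push_cast; linarith)]
    rw [div_lt_iff₀ hcpos] at hn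
    push_cast; nlinarith [hcpos, hb, hn0]
  linarith

lemma Dg_pos {x : ℝ} (hx : 0 < x) : 0 < Dg x := by
  have h1 := Dg_rec hx
  have h2 := Dg_nonneg (by linarith : (0:ℝ) < x + 1)
  have h3 : 0 < 1/x - 1/(x + 1/2) := by
    rw [sub_pos]
    apply one_div_lt_one_div_of_lt hx
    linarith
  linarith

lemma h_eq {x : ℝ} (hx : 0 < x) :
    digamma (2 * x) - digamma x = Real.log 2 + Dg x / 2 := by
  have := digamma_dup hx
  simp only [Dg]
  linarith

lemma h_gt {x : ℝ} (hx : 0 < x) : Real.log 2 < digamma (2 * x) - digamma x := by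
  rw [h_eq hx]
  have := Dg_pos hx
  linarith

lemma h_le {x : ℝ} (hx : 0 < x) :
    digamma (2 * x) - digamma x ≤ Real.log 2 + 1 / (2 * x) := by
  rw [h_eq hx]
  have h1 := Dg_le hx
  have h2 : 1 / x / 2 = 1 / (2 * x) := by ring
  linarith

lemma h_ge {x : ℝ} (hx : 0 < x) : 1 / (2 * x) ≤ digamma (2 * x) - digamma x := by
  have h1 := digamma_add_one (by linarith : (0:ℝ) < 2 * x)
  have h2 := digamma_add_one hx
  have h3 : digamma (x + 1) ≤ digamma (2 * x + 1) :=
    digamma_le (by linarith) (by linarith)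
  have h4 : 1 / x - 1 / (2 * x) = 1 / (2 * x) := by
    field_simp
    ring
  linarith

lemma hasDerivAt_F {x : ℝ} (hx : 0 < x) :
    HasDerivAt (fun y => (1/2) * Real.log (Real.Gamma (2 * y)) - Real.log (Real.Gamma y))
      (digamma (2 * x) - digamma x) x := by
  have hm : HasDerivAt (fun y : ℝ => 2 * y) 2 x := by
    simpa using (hasDerivAt_id x).const_mul (2:ℝ)
  have ha : HasDerivAt (fun y : ℝ => Real.log (Real.Gamma (2 * y))) (digamma (2 * x) * 2) x :=
    (hasDerivAt_logGamma (by linarith : (0:ℝ) < 2 * x)).comp x hm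
  have h := (ha.const_mul (1/2:ℝ)).sub (hasDerivAt_logGamma hx)
  exact h.congr_deriv (by ring)

lemma h_strictAnti {a b : ℝ} (ha : 0 < a) (hab : a < b) :
    digamma (2 * b) - digamma b < digamma (2 * a) - digamma a := by
  rw [h_eq ha, h_eq (ha.trans hab)]
  have := Dg_strictAnti ha hab
  linarith

theorem digamma_two_x_sub_range :
    (fun x => digamma (2 * x) - digamma x) '' Set.Ioi (0:ℝ) = Set.Ioi (Real.log 2) ∧
    (∀ x : ℝ, 0 < x → Real.log 2 < digamma (2 * x) - digamma x) ∧
    (∀ M : ℝ, Real.log 2 < M →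
      ∃! x : ℝ, 0 < x ∧ digamma (2 * x) - digamma x = M) := by
  have hlog2 : (0:ℝ) < Real.log 2 := Real.log_pos (by norm_num)
  -- existence for every M > log 2
  have hex : ∀ M : ℝ, Real.log 2 < M → ∃ x : ℝ, 0 < x ∧ digamma (2 * x) - digamma x = M := by
    intro M hM
    have hM0 : 0 < M := hlog2.trans hM
    set a : ℝ := 1 / (2 * (M + 1)) with ha_def
    set b : ℝ := 1 / (M - Real.log 2) with hb_def
    have ha : 0 < a := one_div_pos.mpr (by linarith)
    have hb : 0 < b := one_div_pos.mpr (by linarith)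
    have hab : a < b := by
      rw [ha_def, hb_def]
      apply one_div_lt_one_div_of_lt (by linarith)
      linarith
    have hFa : M < digamma (2 * a) - digamma a := by
      have := h_ge ha
      have e : 1 / (2 * a) = M + 1 := by
        rw [ha_def, one_div, one_div, mul_inv, inv_inv]
        ring
      linarith
    have hFb : digamma (2 * b) - digamma b < M := by
      have := h_le hb
      have e : 1 / (2 * b) = (M - Real.log 2) / 2 := by
        rw [hb_def, one_div, one_div, mul_inv, inv_inv]
        ring
      linarith
    have hD : ∀ x ∈ Set.Icc a b,
        HasDerivWithinAt (fun y => (1/2) * Real.log (Real.Gamma (2 * y)) - Real.log (Real.Gamma y))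
          (digamma (2 * x) - digamma x) (Set.Icc a b) x := by
      intro x hx
      exact (hasDerivAt_F (lt_of_lt_of_le ha hx.1)).hasDerivWithinAt
    obtain ⟨c, hc, hceq⟩ := exists_hasDerivWithinAt_eq_of_lt_of_gt hab.le hD hFa hFb
    exact ⟨c, lt_of_lt_of_le ha hc.1.le, hceq⟩
  refine ⟨?_, fun x hx => h_gt hx, ?_⟩
  · ext M
    simp only [Set.mem_image, Set.mem_Ioi]
    constructor
    · rintro ⟨x, hx, rfl⟩
      exact h_gt hx
    · intro hM
      obtain ⟨x, hx, hxeq⟩ := hex M hM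
      exact ⟨x, hx, hxeq⟩
  · intro M hM
    obtain ⟨x, hx, hxeq⟩ := hex M hM
    refine ⟨x, ⟨hx, hxeq⟩, ?_⟩
    rintro y ⟨hy, hyeq⟩
    by_contra hne
    rcases lt_or_gt_of_ne hne with h | h
    · have := h_strictAnti hy h
      rw [hxeq, hyeq] at this
      exact lt_irrefl M this
    · have := h_strictAnti hx h
      rw [hxeq, hyeq] at this
      exact lt_irrefl M this
end

section
/- The function $u(x) = 1/\psi'(x)$ is strictly convex on $(0, \infty)$, where $\psi'$ is the trigamma function. -/
/-- The trigamma function `ψ'`. -/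
noncomputable def trigamma : ℝ → ℝ := deriv digamma

open Filter Topology Real Set

namespace Trigamma

/-- The series `Sk p x = ∑ 1/(x+n)^p`. -/
noncomputable def Sk (p : ℕ) (x : ℝ) : ℝ := ∑' n : ℕ, 1 / (x + n) ^ p

lemma summable_aux {x : ℝ} (hx : 0 < x) {p : ℕ} (hp : 2 ≤ p) :
    Summable (fun n : ℕ => 1 / (x + n) ^ p) := by
  have h2 : Summable (fun n : ℕ => 1 / ((n : ℝ) + 1) ^ 2) := by
    have := Real.summable_one_div_nat_pow.mpr (le_refl 2)
    exact_mod_cast (summable_nat_add_iff 1).mpr this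
  rw [← summable_nat_add_iff 1]
  refine h2.of_nonneg_of_le (fun n => by positivity) (fun n => ?_)
  have h1 : ((n : ℝ) + 1) ≤ x + (n + 1 : ℕ) := by push_cast; linarith
  have h0 : (0:ℝ) < (n : ℝ) + 1 := by positivity
  have : ((n:ℝ)+1) ^ 2 ≤ (x + (n+1:ℕ)) ^ p := by
    calc ((n:ℝ)+1) ^ 2 ≤ ((n:ℝ)+1) ^ p := by
          apply pow_le_pow_right₀ (by linarith) hp
      _ ≤ (x + (n+1:ℕ)) ^ p := by
          apply pow_le_pow_left₀ (by positivity) h1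
  exact one_div_le_one_div_of_le (by positivity) this

lemma Sk_pos {x : ℝ} (hx : 0 < x) {p : ℕ} (hp : 2 ≤ p) : 0 < Sk p x := by
  refine Summable.tsum_pos (summable_aux hx hp) (fun n => by positivity) 0 ?_
  simp only [Nat.cast_zero, add_zero]
  positivity

/-- Recurrence: `Sk p x = 1/x^p + Sk p (x+1)`. -/
lemma Sk_rec {x : ℝ} (hx : 0 < x) {p : ℕ} (hp : 2 ≤ p) :
    Sk p x = 1 / x ^ p + Sk p (x + 1) := by
  rw [Sk, Summable.tsum_eq_zero_add (summable_aux hx hp)]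
  congr 1
  · norm_num
  · rw [Sk]
    congr 1 with n
    push_cast
    ring_nf

/-- Telescoping sums. -/
lemma hasSum_telescope (g : ℕ → ℝ) (hmono : ∀ n, g (n + 1) ≤ g n)
    (hg : Tendsto g atTop (𝓝 0)) :
    HasSum (fun n => g n - g (n + 1)) (g 0) := by
  have hanti : Antitone g := antitone_nat_of_succ_le hmono
  have hnonneg : ∀ n, 0 ≤ g n := fun n =>
    le_of_tendsto hg (by filter_upwards [eventually_ge_atTop n] with m hm using hanti hm)
  have h : ∀ n, ∑ i ∈ Finset.range n, (g i - g (i + 1)) = g 0 - g n := by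
    intro n
    induction n with
    | zero => simp
    | succ n ih => rw [Finset.sum_range_succ, ih]; ring
  have hsum : Summable (fun n => g n - g (n + 1)) :=
    summable_of_sum_range_le (c := g 0) (fun n => by linarith [hmono n])
      (fun n => by rw [h]; linarith [hnonneg n])
  refine (hasSum_iff_tendsto_nat_of_summable_norm ?_).mpr ?_
  · refine hsum.congr (fun n => ?_)
    rw [Real.norm_of_nonneg (by linarith [hmono n])]
  · simp only [h]
    simpa using tendsto_const_nhds.sub hg

noncomputable def phia (t : ℝ) : ℝ := 1/t^1 + (1/2)/t^2 + (1/6)/t^3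
noncomputable def phib (t : ℝ) : ℝ := (1/2)/t^2 + (1/2)/t^3 + (1/4)/t^4 - (1/12)/t^6
noncomputable def phic (t : ℝ) : ℝ := (1/3)/t^3 + (1/2)/t^4 + (1/3)/t^5

lemma P1 {t : ℝ} (ht : 0 < t) : 1/t^2 < phia t - phia (t+1) := by
  have key : phia t - phia (t+1) - 1/t^2 = (1/6) / (t^3*(t+1)^3) := by
    unfold phia
    have h1 : t ≠ 0 := ht.ne'
    have h2 : t + 1 ≠ 0 := by positivity
    field_simp
    ring
  nlinarith [div_pos (by norm_num : (0:ℝ) < 1/6) (by positivity : (0:ℝ) < t^3*(t+1)^3)]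

lemma P2 {t : ℝ} (ht : 0 < t) : phib t - phib (t+1) < 1/t^3 := by
  have key : 1/t^3 - (phib t - phib (t+1)) =
      (1/12 + t/2 + t^2 + (2/3)*t^3) / (t^6*(t+1)^6) := by
    unfold phib
    have h1 : t ≠ 0 := ht.ne'
    have h2 : t + 1 ≠ 0 := by positivity
    field_simp
    ring
  nlinarith [div_pos (by positivity : (0:ℝ) < 1/12 + t/2 + t^2 + (2/3)*t^3)
    (by positivity : (0:ℝ) < t^6*(t+1)^6)]

lemma P3 {t : ℝ} (ht : 0 < t) : 1/t^4 < phic t - phic (t+1) := by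
  have key : phic t - phic (t+1) - 1/t^4 =
      (1/3 + (7/6)*t + (7/6)*t^2) / (t^5*(t+1)^5) := by
    unfold phic
    have h1 : t ≠ 0 := ht.ne'
    have h2 : t + 1 ≠ 0 := by positivity
    field_simp
    ring
  nlinarith [div_pos (by positivity : (0:ℝ) < 1/3 + (7/6)*t + (7/6)*t^2)
    (by positivity : (0:ℝ) < t^5*(t+1)^5)]

lemma phia_anti {t : ℝ} (ht : 0 < t) : phia (t+1) ≤ phia t := by
  have h := P1 ht
  have h2 : (0:ℝ) < 1/t^2 := by positivity
  linarith

lemma phic_anti {t : ℝ} (ht : 0 < t) : phic (t+1) ≤ phic t := by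
  have h := P3 ht
  have h2 : (0:ℝ) < 1/t^4 := by positivity
  linarith

lemma phib_anti {t : ℝ} (ht : 1 ≤ t) : phib (t+1) ≤ phib t := by
  have ht0 : (0:ℝ) < t := by linarith
  have hs : 0 ≤ t - 1 := by linarith
  have key : phib t - phib (t+1) =
      (247/4 + (759/2)*(t-1) + 1005*(t-1)^2 + (4558/3)*(t-1)^3 + 1452*(t-1)^4
        + 912*(t-1)^5 + 377*(t-1)^6 + 99*(t-1)^7 + 15*(t-1)^8 + (t-1)^9)
        / (t^6*(t+1)^6) := by
    unfold phib
    have h1 : t ≠ 0 := ht0.ne'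
    have h2 : t + 1 ≠ 0 := by positivity
    field_simp
    ring
  nlinarith [div_nonneg (by positivity : (0:ℝ) ≤ 247/4 + (759/2)*(t-1) + 1005*(t-1)^2
      + (4558/3)*(t-1)^3 + 1452*(t-1)^4 + 912*(t-1)^5 + 377*(t-1)^6 + 99*(t-1)^7
      + 15*(t-1)^8 + (t-1)^9)
    (by positivity : (0:ℝ) ≤ t^6*(t+1)^6)]

lemma tendsto_add_nat_atTop (y : ℝ) : Tendsto (fun n : ℕ => y + n) atTop atTop :=
  tendsto_atTop_add_const_left _ y tendsto_natCast_atTop_atTop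

lemma tendsto_cdivpow (c : ℝ) {p : ℕ} (hp : p ≠ 0) (y : ℝ) :
    Tendsto (fun n : ℕ => c / (y + n) ^ p) atTop (𝓝 0) := by
  have h : Tendsto (fun n : ℕ => ((y + n) ^ p : ℝ)) atTop atTop :=
    (tendsto_pow_atTop hp).comp (tendsto_add_nat_atTop y)
  simpa using h.const_div_atTop c

lemma tendsto_phia (y : ℝ) : Tendsto (fun n : ℕ => phia (y + n)) atTop (𝓝 0) := by
  have h := ((tendsto_cdivpow 1 one_ne_zero y).add (tendsto_cdivpow (1/2) two_ne_zero y)).add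
    (tendsto_cdivpow (1/6) three_ne_zero y)
  simp only [add_zero] at h
  exact h

lemma tendsto_phib (y : ℝ) : Tendsto (fun n : ℕ => phib (y + n)) atTop (𝓝 0) := by
  have h := (((tendsto_cdivpow (1/2) two_ne_zero y).add
    (tendsto_cdivpow (1/2) three_ne_zero y)).add
    (tendsto_cdivpow (1/4) four_ne_zero y)).sub
    (tendsto_cdivpow (1/12) (by norm_num : (6:ℕ) ≠ 0) y)
  simp only [add_zero, sub_zero] at h
  exact h

lemma tendsto_phic (y : ℝ) : Tendsto (fun n : ℕ => phic (y + n)) atTop (𝓝 0) := by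
  have h := ((tendsto_cdivpow (1/3) three_ne_zero y).add
    (tendsto_cdivpow (1/2) four_ne_zero y)).add
    (tendsto_cdivpow (1/3) (by norm_num : (5:ℕ) ≠ 0) y)
  simp only [add_zero] at h
  exact h

lemma cast_succ_eq (y : ℝ) (n : ℕ) : y + ((n + 1 : ℕ) : ℝ) = y + n + 1 := by push_cast; ring

/-- Upper bound for `Sk 2`. -/
lemma B1 {y : ℝ} (hy : 0 < y) : Sk 2 y < phia y := by
  have htel : HasSum (fun n : ℕ => phia (y + n) - phia (y + n + 1)) (phia y) := by
    have h := hasSum_telescope (fun n : ℕ => phia (y + n))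
      (fun n => by show phia (y + ((n+1:ℕ):ℝ)) ≤ phia (y + n); rw [cast_succ_eq]; exact phia_anti (by positivity))
      (tendsto_phia y)
    simp only [Nat.cast_zero, add_zero] at h
    exact h.congr_fun (fun n => by rw [cast_succ_eq])
  rw [Sk, ← htel.tsum_eq]
  exact Summable.tsum_lt_tsum_of_nonneg (fun n => by positivity)
    (fun n => (P1 (by positivity : (0:ℝ) < y + n)).le)
    (P1 (by simpa using hy : (0:ℝ) < y + (0:ℕ))) htel.summable

/-- Upper bound for `Sk 4`. -/
lemma B3 {y : ℝ} (hy : 0 < y) : Sk 4 y < phic y := by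
  have htel : HasSum (fun n : ℕ => phic (y + n) - phic (y + n + 1)) (phic y) := by
    have h := hasSum_telescope (fun n : ℕ => phic (y + n))
      (fun n => by show phic (y + ((n+1:ℕ):ℝ)) ≤ phic (y + n); rw [cast_succ_eq]; exact phic_anti (by positivity))
      (tendsto_phic y)
    simp only [Nat.cast_zero, add_zero] at h
    exact h.congr_fun (fun n => by rw [cast_succ_eq])
  rw [Sk, ← htel.tsum_eq]
  exact Summable.tsum_lt_tsum_of_nonneg (fun n => by positivity)
    (fun n => (P3 (by positivity : (0:ℝ) < y + n)).le)
    (P3 (by simpa using hy : (0:ℝ) < y + (0:ℕ))) htel.summable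

/-- Lower bound for `Sk 3`. -/
lemma B2 {y : ℝ} (hy : 1 ≤ y) : phib y < Sk 3 y := by
  have hy0 : (0:ℝ) < y := by linarith
  have htel : HasSum (fun n : ℕ => phib (y + n) - phib (y + n + 1)) (phib y) := by
    have h := hasSum_telescope (fun n : ℕ => phib (y + n))
      (fun n => by
        show phib (y + ((n+1:ℕ):ℝ)) ≤ phib (y + n)
        rw [cast_succ_eq]
        exact phib_anti (by
          have : (0:ℝ) ≤ n := Nat.cast_nonneg n
          linarith))
      (tendsto_phib y)
    simp only [Nat.cast_zero, add_zero] at h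
    exact h.congr_fun (fun n => by rw [cast_succ_eq])
  rw [Sk, ← htel.tsum_eq]
  refine Summable.tsum_lt_tsum_of_nonneg (i := 0) ?_ ?_ ?_ (summable_aux hy0 (by norm_num))
  · intro n
    have hb := phib_anti (t := y + n) (by have : (0:ℝ) ≤ n := Nat.cast_nonneg n; linarith)
    linarith
  · exact fun n => (P2 (by positivity : (0:ℝ) < y + n)).le
  · exact P2 (by simpa using hy0 : (0:ℝ) < y + (0:ℕ))

lemma S3_le_S2 {y : ℝ} (hy : 1 ≤ y) : Sk 3 y ≤ Sk 2 y := by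
  have hy0 : (0:ℝ) < y := by linarith
  refine Summable.tsum_le_tsum (fun n => ?_) (summable_aux hy0 (by norm_num))
    (summable_aux hy0 (by norm_num))
  have h1 : (1:ℝ) ≤ y + n := by have : (0:ℝ) ≤ n := Nat.cast_nonneg n; linarith
  have h2 : (0:ℝ) < y + n := by linarith
  apply one_div_le_one_div_of_le (by positivity)
  calc (y+(n:ℝ))^2 = (y+n)^2 * 1 := by ring
    _ ≤ (y+n)^2 * (y+n) := by nlinarith
    _ = (y+n)^3 := by ring


lemma delta_pos {x : ℝ} (hx : 0 < x) :
    6*(Sk 2 (x+1))/x^4 + 6*(Sk 4 (x+1))/x^2 < 16*(Sk 3 (x+1))/x^3 + 2/x^6 := by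
  have hy : (0:ℝ) < x + 1 := by linarith
  have hy1 : (1:ℝ) ≤ x + 1 := by linarith
  have ha := B1 hy
  have hb := B2 hy1
  have hc := B3 hy
  have key : 16*phib (x+1)/x^3 + 2/x^6 - 6*phia (x+1)/x^4 - 6*phic (x+1)/x^2 =
      (2 + 12*x + 20*x^2 + (41/3)*x^3 + 6*x^4 + x^5)/(x^6*(x+1)^6) := by
    unfold phia phib phic
    have h1 : x ≠ 0 := hx.ne'
    have h2 : x + 1 ≠ 0 := hy.ne'
    field_simp
    ring
  have hpos : (0:ℝ) < (2 + 12*x + 20*x^2 + (41/3)*x^3 + 6*x^4 + x^5)/(x^6*(x+1)^6) := by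
    positivity
  have e1 : 6*(Sk 2 (x+1))/x^4 ≤ 6*phia (x+1)/x^4 := by gcongr
  have e2 : 6*(Sk 4 (x+1))/x^2 ≤ 6*phic (x+1)/x^2 := by gcongr
  have e3 : 16*phib (x+1)/x^3 ≤ 16*(Sk 3 (x+1))/x^3 := by gcongr
  linarith

/-- The key quantity `F = 2 ψ''² - ψ' ψ''' = 8 S₃² - 6 S₂ S₄`. -/
noncomputable def FF (x : ℝ) : ℝ := 8*(Sk 3 x)^2 - 6*(Sk 2 x)*(Sk 4 x)

lemma FF_succ_lt {x : ℝ} (hx : 0 < x) : FF (x+1) < FF x := by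
  have h := delta_pos hx
  have hx6 : x ≠ 0 := hx.ne'
  rw [FF, FF, Sk_rec hx (by norm_num : 2 ≤ 2), Sk_rec hx (by norm_num : 2 ≤ 3),
    Sk_rec hx (by norm_num : 2 ≤ 4)]
  have expand : 8*(1/x^3 + Sk 3 (x+1))^2 - 6*(1/x^2 + Sk 2 (x+1))*(1/x^4 + Sk 4 (x+1))
      - (8*(Sk 3 (x+1))^2 - 6*(Sk 2 (x+1))*(Sk 4 (x+1)))
      = (16*(Sk 3 (x+1))/x^3 + 2/x^6) - (6*(Sk 2 (x+1))/x^4 + 6*(Sk 4 (x+1))/x^2) := by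
    field_simp
    ring
  linarith

lemma FF_nonneg {x : ℝ} (hx : 0 < x) : 0 ≤ FF x := by
  set u : ℕ → ℝ := fun n => FF (x + n) with hu
  have hstep : ∀ n, u (n + 1) ≤ u n := by
    intro n
    have : x + ((n + 1 : ℕ) : ℝ) = (x + n) + 1 := by push_cast; ring
    simp only [hu, this]
    exact (FF_succ_lt (by positivity)).le
  have hanti : Antitone u := antitone_nat_of_succ_le hstep
  have h2 : Tendsto (fun n : ℕ => Sk 2 (x + n)) atTop (𝓝 0) := by
    refine squeeze_zero (fun n => (Sk_pos (by positivity) (by norm_num)).le)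
      (fun n => (B1 (by positivity)).le) (tendsto_phia x)
  have h4 : Tendsto (fun n : ℕ => Sk 4 (x + n)) atTop (𝓝 0) := by
    refine squeeze_zero (fun n => (Sk_pos (by positivity) (by norm_num)).le)
      (fun n => (B3 (by positivity)).le) (tendsto_phic x)
  have h3 : Tendsto (fun n : ℕ => Sk 3 (x + n)) atTop (𝓝 0) := by
    refine squeeze_zero' ?_ ?_ h2
    · filter_upwards with n
      exact (Sk_pos (by positivity) (by norm_num)).le
    · filter_upwards [eventually_ge_atTop 1] with n hn
      refine S3_le_S2 ?_
      have : (1:ℝ) ≤ n := by exact_mod_cast hn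
      linarith
  have htend : Tendsto u atTop (𝓝 0) := by
    have := (((h3.mul h3).const_mul 8).sub ((h2.mul h4).const_mul 6))
    simp only [mul_zero, zero_mul, sub_zero] at this
    refine this.congr (fun n => ?_)
    simp only [hu, FF]
    ring
  have h0 : (0:ℝ) ≤ u 0 := le_of_tendsto htend (by
    filter_upwards with n using hanti (Nat.zero_le n))
  simpa [hu] using h0

lemma FF_pos {x : ℝ} (hx : 0 < x) : 0 < FF x :=
  lt_of_le_of_lt (FF_nonneg (by linarith)) (FF_succ_lt hx)


/-- Term-by-term differentiation of a series on an open set. -/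
lemma hasDerivAt_tsum_on {F F' : ℕ → ℝ → ℝ} {s : Set ℝ} (hs : IsOpen s)
    {u : ℕ → ℝ} (hu : Summable u)
    (hF : ∀ n, ∀ x ∈ s, HasDerivAt (F n) (F' n x) x)
    (hb : ∀ n, ∀ x ∈ s, ‖F' n x‖ ≤ u n)
    (hsum : ∀ x ∈ s, Summable (fun n => F n x))
    {x : ℝ} (hx : x ∈ s) :
    HasDerivAt (fun y => ∑' n, F n y) (∑' n, F' n x) x := by
  refine hasDerivAt_of_tendstoUniformlyOn (f := fun (N : ℕ) y => ∑ n ∈ Finset.range N, F n y)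
    (f' := fun (N : ℕ) y => ∑ n ∈ Finset.range N, F' n y) hs
    (tendstoUniformlyOn_tsum_nat hu (fun n y hy => hb n y hy)) ?_ ?_ hx
  · filter_upwards with N y hy
    exact HasDerivAt.fun_sum fun n _ => hF n y hy
  · intro y hy
    exact (hsum y hy).hasSum.tendsto_sum_nat

lemma summable_shift {x : ℝ} (hx : 0 < x) {p : ℕ} (hp : 2 ≤ p) :
    Summable (fun k : ℕ => 1 / (x + ((k : ℝ) + 1)) ^ p) := by
  have h := (summable_nat_add_iff 1).mpr (summable_aux hx hp)
  refine h.congr (fun k => ?_)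
  push_cast
  ring_nf

lemma hasDerivAt_term {p : ℕ} (hp : 1 ≤ p) (c y : ℝ) (hy : 0 < y + c) :
    HasDerivAt (fun z => 1 / (z + c) ^ p) (-(p / (y + c) ^ (p+1))) y := by
  have hpow : HasDerivAt (fun z : ℝ => (z + c) ^ p) ((p:ℝ) * (y + c) ^ (p - 1)) y := by
    simpa using ((hasDerivAt_id y).add_const c).fun_pow p
  have hinv := hpow.inv (by positivity)
  have hval : -((p:ℝ) * (y + c) ^ (p - 1)) / ((y + c) ^ p) ^ 2 = -(p / (y + c) ^ (p+1)) := by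
    obtain ⟨q, rfl⟩ : ∃ q, p = q + 1 := ⟨p - 1, (Nat.succ_pred_eq_of_pos hp).symm⟩
    have h0 : (y + c) ≠ 0 := hy.ne'
    simp only [Nat.add_sub_cancel]
    field_simp
    ring
  simp only [one_div]
  rw [← hval]
  exact hinv

lemma hasDerivAt_Sk {p : ℕ} (hp : 2 ≤ p) {x : ℝ} (hx : 0 < x) :
    HasDerivAt (Sk p) (-(p : ℝ) * Sk (p+1) x) x := by
  have hx2 : (0:ℝ) < x / 2 := by linarith
  have key : HasDerivAt (fun y => ∑' n : ℕ, 1 / (y + (n:ℝ)) ^ p)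
      (∑' n : ℕ, -((p:ℝ) / (x + (n:ℝ)) ^ (p+1))) x := by
    refine hasDerivAt_tsum_on (s := Ioi (x/2)) (F' := fun n y => -((p:ℝ) / (y + (n:ℝ)) ^ (p+1)))
      isOpen_Ioi (u := fun n => (p:ℝ) / (x/2 + (n:ℝ)) ^ (p+1)) ?_ ?_ ?_ ?_
      (by simpa using (by linarith : x/2 < x))
    · exact ((summable_aux (p := p+1) hx2 (by omega)).mul_left (p:ℝ)).congr
        (fun n => by rw [mul_one_div])
    · intro n y hy
      have hy' : x/2 < y := hy
      have hn : (0:ℝ) ≤ n := Nat.cast_nonneg n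
      exact hasDerivAt_term (by omega) _ y (by linarith)
    · intro n y hy
      have hy' : x/2 < y := hy
      have h1 : (0:ℝ) < x/2 + n := by positivity
      have h2 : (0:ℝ) < y + n := by linarith
      rw [norm_neg, Real.norm_of_nonneg (by positivity)]
      apply div_le_div_of_nonneg_left (by positivity) (by positivity)
      exact pow_le_pow_left₀ h1.le (by linarith) _
    · intro y hy
      have hy' : x/2 < y := hy
      exact summable_aux (by linarith) hp
  have hval : (∑' n : ℕ, -((p:ℝ) / (x + (n:ℝ)) ^ (p+1))) = -(p:ℝ) * Sk (p+1) x := by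
    rw [Sk, ← tsum_mul_left]
    exact tsum_congr fun n => by ring
  rw [hval] at key
  exact key


/-! ### The series representation of the trigamma function -/

noncomputable def TT (x : ℝ) : ℝ := ∑' k : ℕ, (1/((k:ℝ)+1) - 1/(x+((k:ℝ)+1)))

noncomputable def DG (x : ℝ) : ℝ := -Real.eulerMascheroniConstant - 1/x + TT x

noncomputable def cc (n : ℕ) : ℝ := Real.log n - ∑ k ∈ Finset.range n, (1/((k:ℝ)+1))

lemma term_bound {b y : ℝ} (hy : 0 < y) (hyb : y ≤ b) (k : ℕ) :
    ‖1/((k:ℝ)+1) - 1/(y+((k:ℝ)+1))‖ ≤ b/((k:ℝ)+1)^2 := by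
  have hk : (0:ℝ) < (k:ℝ)+1 := by positivity
  have h2 : (0:ℝ) < y+((k:ℝ)+1) := by linarith
  have heq : 1/((k:ℝ)+1) - 1/(y+((k:ℝ)+1)) = y/(((k:ℝ)+1)*(y+((k:ℝ)+1))) := by
    field_simp
    ring
  rw [heq, Real.norm_of_nonneg (by positivity)]
  calc y/(((k:ℝ)+1)*(y+((k:ℝ)+1))) ≤ b/(((k:ℝ)+1)*((k:ℝ)+1)) := by
        refine div_le_div₀ (by linarith) hyb (by positivity) ?_
        nlinarith
    _ = b/((k:ℝ)+1)^2 := by rw [← pow_two]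

lemma summable_ub (b : ℝ) : Summable (fun k : ℕ => b/((k:ℝ)+1)^2) := by
  have h2 : Summable (fun n : ℕ => 1 / ((n : ℝ) + 1) ^ 2) := by
    have := Real.summable_one_div_nat_pow.mpr (le_refl 2)
    exact_mod_cast (summable_nat_add_iff 1).mpr this
  exact (h2.mul_left b).congr (fun n => by rw [mul_one_div])

lemma summable_term {y : ℝ} (hy : 0 < y) :
    Summable (fun k : ℕ => 1/((k:ℝ)+1) - 1/(y+((k:ℝ)+1))) := by
  refine Summable.of_nonneg_of_le (fun k => ?_) (fun k => ?_) (summable_ub y)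
  · have hk : (0:ℝ) < (k:ℝ)+1 := by positivity
    have h2 : (0:ℝ) < y+((k:ℝ)+1) := by linarith
    have : 1/(y+((k:ℝ)+1)) ≤ 1/((k:ℝ)+1) := by
      apply one_div_le_one_div_of_le hk
      linarith
    linarith
  · exact (Real.le_norm_self _).trans (term_bound hy le_rfl k)

lemma tendsto_cc : Tendsto cc atTop (𝓝 (-Real.eulerMascheroniConstant)) := by
  have h := Real.tendsto_harmonic_sub_log.neg
  refine h.congr (fun n => ?_)
  have hh : ((harmonic n : ℚ) : ℝ) = ∑ k ∈ Finset.range n, (1/((k:ℝ)+1)) := by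
    rw [harmonic]
    push_cast
    simp [one_div]
  rw [cc, ← hh]
  ring

lemma hasDerivAt_logGamma {x : ℝ} (hx : 0 < x) :
    HasDerivAt (fun y => Real.log (Real.Gamma y)) (DG x) x := by
  have hs : IsOpen (Ioo (0:ℝ) (x+1)) := isOpen_Ioo
  have hxs : x ∈ Ioo (0:ℝ) (x+1) := ⟨hx, by linarith⟩
  refine hasDerivAt_of_tendstoUniformlyOn (l := (atTop : Filter ℕ))
    (f := fun (n : ℕ) y => Real.BohrMollerup.logGammaSeq y n)
    (f' := fun (n : ℕ) y => (cc n - 1/y) +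
      ∑ k ∈ Finset.range n, (1/((k:ℝ)+1) - 1/(y+((k:ℝ)+1))))
    hs ?_ ?_ ?_ hxs
  · have h1 : TendstoUniformlyOn (fun (n : ℕ) y => cc n - 1/y)
        (fun y => -Real.eulerMascheroniConstant - 1/y) atTop (Ioo (0:ℝ) (x+1)) := by
      rw [Metric.tendstoUniformlyOn_iff]
      intro ε hε
      filter_upwards [Metric.tendsto_nhds.mp tendsto_cc ε hε] with n hn y _
      rw [Real.dist_eq] at hn ⊢
      have heq : (-Real.eulerMascheroniConstant - 1/y) - (cc n - 1/y)
          = -Real.eulerMascheroniConstant - cc n := by ring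
      rw [heq, abs_sub_comm]
      exact hn
    have h2 : TendstoUniformlyOn
        (fun (n : ℕ) y => ∑ k ∈ Finset.range n, (1/((k:ℝ)+1) - 1/(y+((k:ℝ)+1))))
        TT atTop (Ioo (0:ℝ) (x+1)) :=
      tendstoUniformlyOn_tsum_nat (summable_ub (x+1))
        (fun k y hy => term_bound hy.1 hy.2.le k)
    exact h1.add h2
  · filter_upwards with n
    intro y hy
    have hy0 : 0 < y := hy.1
    have hder : HasDerivAt (fun z => Real.BohrMollerup.logGammaSeq z n)
        (Real.log n - ∑ m ∈ Finset.range (n+1), 1/(y+(m:ℝ))) y := by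
      have h1 : HasDerivAt (fun z : ℝ => z * Real.log n + Real.log (Nat.factorial n)) (Real.log n) y := by
        simpa using ((hasDerivAt_id y).mul_const (Real.log n)).add_const (Real.log (Nat.factorial n))
      have h2 : HasDerivAt (fun z : ℝ => ∑ m ∈ Finset.range (n+1), Real.log (z+(m:ℝ)))
          (∑ m ∈ Finset.range (n+1), 1/(y+(m:ℝ))) y := by
        apply HasDerivAt.fun_sum
        intro m _
        have hm0 : (0:ℝ) < y + m := by
          have : (0:ℝ) ≤ m := Nat.cast_nonneg m
          linarith
        simpa using ((hasDerivAt_id y).add_const (m:ℝ)).log hm0.ne'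
      have h3 := h1.sub h2
      exact h3.congr_of_eventuallyEq (Filter.Eventually.of_forall fun z => rfl)
    refine hder.congr_deriv ?_
    rw [Finset.sum_range_succ', Finset.sum_sub_distrib, cc]
    push_cast
    ring
  · intro y hy
    exact Real.BohrMollerup.tendsto_log_gamma hy.1

lemma hasDerivAt_DG {x : ℝ} (hx : 0 < x) : HasDerivAt DG (Sk 2 x) x := by
  have hx2 : (0:ℝ) < x/2 := by linarith
  have h1 : HasDerivAt (fun y : ℝ => -Real.eulerMascheroniConstant - 1/y) (1/x^2) x := by
    have h0 : HasDerivAt (fun y : ℝ => 1/y) (-(1/(x^2))) x := by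
      simpa [one_div] using hasDerivAt_inv hx.ne'
    simpa using h0.const_sub (-Real.eulerMascheroniConstant)
  have h2 : HasDerivAt TT (∑' k : ℕ, 1/(x+((k:ℝ)+1))^2) x := by
    refine hasDerivAt_tsum_on (s := Ioo (x/2) (x+1)) isOpen_Ioo
      (u := fun k => 1/(x/2+((k:ℝ)+1))^2)
      (F' := fun k y => 1/(y+((k:ℝ)+1))^2) ?_ ?_ ?_ ?_ ⟨by linarith, by linarith⟩
    · exact summable_shift hx2 le_rfl
    · intro k y hy
      have hy0 : (0:ℝ) < y + ((k:ℝ)+1) := by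
        have hk : (0:ℝ) ≤ k := Nat.cast_nonneg k
        have := hy.1
        linarith
      have h := (hasDerivAt_term (le_refl 1) ((k:ℝ)+1) y hy0).const_sub (1/((k:ℝ)+1))
      simp only [pow_one] at h
      refine h.congr_deriv ?_
      norm_num
    · intro k y hy
      have hy' := hy.1
      have hk : (0:ℝ) ≤ k := Nat.cast_nonneg k
      have ha : (0:ℝ) < x/2 + ((k:ℝ)+1) := by linarith
      rw [Real.norm_of_nonneg (by positivity)]
      apply div_le_div_of_nonneg_left (by norm_num) (by positivity)
      exact pow_le_pow_left₀ ha.le (by linarith) _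
    · intro y hy
      have := hy.1
      exact summable_term (by linarith)
  have h := h1.add h2
  have hval : 1/x^2 + (∑' k : ℕ, 1/(x+((k:ℝ)+1))^2) = Sk 2 x := by
    rw [Sk, Summable.tsum_eq_zero_add (summable_aux hx le_rfl)]
    congr 1
    · norm_num
    · apply tsum_congr
      intro k
      push_cast
      ring_nf
  rw [hval] at h
  exact h


lemma digamma_eq {x : ℝ} (hx : 0 < x) : digamma x = DG x :=
  (hasDerivAt_logGamma hx).deriv

lemma eventuallyEq_Ioi {f g : ℝ → ℝ} {x : ℝ} (hx : 0 < x)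
    (h : ∀ y, 0 < y → f y = g y) : f =ᶠ[𝓝 x] g := by
  filter_upwards [isOpen_Ioi.mem_nhds (show x ∈ Ioi 0 from hx)] with y hy
  exact h y hy

lemma trigamma_eq {x : ℝ} (hx : 0 < x) : trigamma x = Sk 2 x := by
  have hev : digamma =ᶠ[𝓝 x] DG := eventuallyEq_Ioi hx fun y hy => digamma_eq hy
  show deriv digamma x = Sk 2 x
  rw [hev.deriv_eq]
  exact (hasDerivAt_DG hx).deriv

/-- First derivative of `1 / trigamma`. -/
noncomputable def G1 (y : ℝ) : ℝ := 2 * Sk 3 y / (Sk 2 y) ^ 2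

lemma hasDerivAt_one_div_trigamma {x : ℝ} (hx : 0 < x) :
    HasDerivAt (fun y => 1 / trigamma y) (G1 x) x := by
  have hS2 := hasDerivAt_Sk (le_refl 2) hx
  have hS2pos : 0 < Sk 2 x := Sk_pos hx le_rfl
  have hinv := hS2.inv hS2pos.ne'
  have hev : (fun y => 1 / trigamma y) =ᶠ[𝓝 x] (fun y => (Sk 2 y)⁻¹) :=
    eventuallyEq_Ioi hx fun y hy => by rw [trigamma_eq hy, one_div]
  have h := hinv.congr_of_eventuallyEq hev
  refine h.congr_deriv ?_
  rw [G1]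
  field_simp
  push_cast
  ring

lemma deriv_one_div_trigamma {x : ℝ} (hx : 0 < x) :
    deriv (fun y => 1 / trigamma y) x = G1 x :=
  (hasDerivAt_one_div_trigamma hx).deriv

lemma hasDerivAt_G1 {x : ℝ} (hx : 0 < x) :
    HasDerivAt G1 (FF x / (Sk 2 x) ^ 3) x := by
  have hS2 := hasDerivAt_Sk (le_refl 2) hx
  have hS3 := hasDerivAt_Sk (by norm_num : 2 ≤ 3) hx
  have hS2pos : 0 < Sk 2 x := Sk_pos hx le_rfl
  have hnum : HasDerivAt (fun y => 2 * Sk 3 y) (2 * (-(3:ℝ) * Sk 4 x)) x := hS3.const_mul 2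
  have hden : HasDerivAt (fun y => (Sk 2 y) ^ 2)
      ((2:ℕ) * (Sk 2 x) ^ 1 * (-(2:ℝ) * Sk 3 x)) x := hS2.pow 2
  have h := hnum.div hden (by positivity)
  have hval : (2 * (-(3:ℝ) * Sk 4 x) * (Sk 2 x) ^ 2
      - 2 * Sk 3 x * ((2:ℕ) * (Sk 2 x) ^ 1 * (-(2:ℝ) * Sk 3 x))) / ((Sk 2 x) ^ 2) ^ 2
      = FF x / (Sk 2 x) ^ 3 := by
    rw [FF]
    field_simp
    ring
  rw [hval] at h
  exact h

lemma deriv2_pos {x : ℝ} (hx : 0 < x) :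
    0 < deriv (deriv (fun y => 1 / trigamma y)) x := by
  have hev : deriv (fun y => 1 / trigamma y) =ᶠ[𝓝 x] G1 :=
    eventuallyEq_Ioi hx fun y hy => deriv_one_div_trigamma hy
  rw [hev.deriv_eq, (hasDerivAt_G1 hx).deriv]
  exact div_pos (FF_pos hx) (pow_pos (Sk_pos hx le_rfl) 3)

end Trigamma

theorem one_div_trigamma_strictConvexOn :
    StrictConvexOn ℝ (Set.Ioi (0:ℝ)) (fun x => 1 / trigamma x) := by
  apply strictConvexOn_of_deriv2_pos (convex_Ioi 0)
  · intro y hy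
    exact (Trigamma.hasDerivAt_one_div_trigamma hy).continuousAt.continuousWithinAt
  · intro y hy
    rw [interior_Ioi] at hy
    have h := Trigamma.deriv2_pos hy
    simpa [Function.iterate_succ, Function.comp] using h
end

section
/- For all $x, y > 0$, the trigamma function satisfies $\dfrac{1}{\psi'(x+y)} > \dfrac{1}{\psi'(x)} + \dfrac{1}{\psi'(y)}$; equivalently, $\psi'(x+y)\left(\dfrac{1}{\psi'(x)} + \dfrac{1}{\psi'(y)}\right) < 1$. -/
open Real Set Filter Topology

set_option maxHeartbeats 1000000

namespace TrigammaAux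

/-- partial fraction series for trigamma -/
noncomputable def S2 (x : ℝ) : ℝ := ∑' n : ℕ, 1 / (x + n) ^ 2

noncomputable def S3 (x : ℝ) : ℝ := ∑' n : ℕ, 1 / (x + n) ^ 3

lemma summable_base : Summable (fun n : ℕ => 1 / ((n : ℝ) + 1) ^ 2) := by
  have := (summable_nat_add_iff (f := fun n : ℕ => 1 / (n : ℝ) ^ 2) 1).2
    (summable_one_div_nat_pow.2 one_lt_two)
  simpa using this

lemma summable_S2 {x : ℝ} (hx : 0 < x) : Summable (fun n : ℕ => 1 / (x + n) ^ 2) := by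
  rw [← summable_nat_add_iff 1]
  refine Summable.of_nonneg_of_le (fun n => by positivity) (fun n => ?_) summable_base
  have h1 : ((n : ℝ) + 1) ≤ x + (n + 1 : ℕ) := by push_cast; linarith
  have h0 : (0:ℝ) < (n : ℝ) + 1 := by positivity
  gcongr


lemma summable_S3 {x : ℝ} (hx : 0 < x) : Summable (fun n : ℕ => 1 / (x + n) ^ 3) := by
  rw [← summable_nat_add_iff 1]
  refine Summable.of_nonneg_of_le (fun n => by positivity) (fun n => ?_) summable_base
  have h0 : (0:ℝ) < (n : ℝ) + 1 := by positivity
  have h1 : ((n : ℝ) + 1) ≤ x + (n + 1 : ℕ) := by push_cast; linarith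
  calc 1 / (x + ((n : ℕ) + 1 : ℕ)) ^ 3 ≤ 1 / ((n:ℝ) + 1) ^ 3 := by gcongr
    _ ≤ 1 / ((n:ℝ) + 1) ^ 2 := by
        apply one_div_le_one_div_of_le (by positivity)
        calc ((n:ℝ)+1)^2 = ((n:ℝ)+1)^2 * 1 := by ring
          _ ≤ ((n:ℝ)+1)^2 * ((n:ℝ)+1) := by nlinarith [Nat.cast_nonneg (α := ℝ) n]
          _ = ((n:ℝ)+1)^3 := by ring

/-- The digamma-series term. -/
noncomputable def dterm (n : ℕ) (x : ℝ) : ℝ := 1 / (n + 1) - 1 / (x + n)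

lemma dterm_eq {x : ℝ} (hx : 0 < x) (n : ℕ) :
    dterm n x = (x - 1) * (1 / (((n : ℝ) + 1) * (x + n))) := by
  have h1 : ((n : ℝ) + 1) ≠ 0 := by positivity
  have h2 : (x + (n : ℝ)) ≠ 0 := by positivity
  unfold dterm
  field_simp
  ring

lemma summable_dterm {x : ℝ} (hx : 0 < x) : Summable (fun n : ℕ => dterm n x) := by
  have key : Summable (fun n : ℕ => 1 / (((n : ℝ) + 1) * (x + n))) := by
    refine Summable.of_nonneg_of_le (fun n => by positivity) (fun n => ?_)
      (summable_base.mul_left (1 / min x 1))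
    have hmin : 0 < min x 1 := lt_min hx one_pos
    have h1 : min x 1 * ((n : ℝ) + 1) ≤ x + n := by
      rcases le_total x 1 with h | h
      · rw [min_eq_left h]
        have : x * (n : ℝ) ≤ n := by
          nlinarith [Nat.cast_nonneg (α := ℝ) n]
        nlinarith
      · rw [min_eq_right h]
        have := Nat.cast_nonneg (α := ℝ) n
        linarith
    rw [div_mul_div_comm, one_mul]
    apply one_div_le_one_div_of_le (by positivity)
    calc min x 1 * ((n:ℝ)+1)^2 = ((n:ℝ)+1) * (min x 1 * ((n:ℝ)+1)) := by ring
      _ ≤ ((n:ℝ)+1) * (x + n) := by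
          have : (0:ℝ) < (n:ℝ)+1 := by positivity
          nlinarith
  have := key.mul_left (x - 1)
  apply this.congr
  intro n
  exact (dterm_eq hx n).symm

noncomputable def dser (x : ℝ) : ℝ := ∑' n : ℕ, dterm n x

lemma diffAt_logGamma {x : ℝ} (hx : 0 < x) :
    DifferentiableAt ℝ (fun y => Real.log (Real.Gamma y)) x := by
  have hne : ∀ m : ℕ, x ≠ -m := fun m =>
    ((neg_nonpos.mpr (Nat.cast_nonneg m)).trans_lt hx).ne'
  exact (Real.differentiableAt_Gamma hne).log (Real.Gamma_ne_zero hne)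

lemma digamma_rec {x : ℝ} (hx : 0 < x) : digamma (x + 1) = digamma x + 1 / x := by
  unfold digamma
  rw [← deriv_comp_add_const, one_div, ← Real.deriv_log,
    ← deriv_add (diffAt_logGamma hx) (Real.differentiableAt_log hx.ne')]
  apply Filter.EventuallyEq.deriv_eq
  filter_upwards [eventually_gt_nhds hx] with y hy
  rw [Real.Gamma_add_one hy.ne', Real.log_mul hy.ne' (Real.Gamma_pos_of_pos hy).ne', add_comm]
  rfl

lemma digamma_rec_nat {x : ℝ} (hx : 0 < x) (n : ℕ) :
    digamma (x + n) = digamma x + ∑ k ∈ Finset.range n, 1 / (x + k) := by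
  induction n with
  | zero => simp
  | succ n ih =>
    have hxn : 0 < x + n := by positivity
    have : x + (n + 1 : ℕ) = (x + n) + 1 := by push_cast; ring
    rw [this, digamma_rec hxn, ih, Finset.sum_range_succ]
    ring

lemma digamma_mono {a b : ℝ} (ha : 0 < a) (hab : a ≤ b) : digamma a ≤ digamma b := by
  rcases eq_or_lt_of_le hab with rfl | h
  · exact le_rfl
  have hb : 0 < b := ha.trans h
  have hc : ConvexOn ℝ (Ioi 0) (fun y => Real.log (Real.Gamma y)) :=
    Real.convexOn_log_Gamma
  have h1 := hc.deriv_le_slope (mem_Ioi.2 ha) (mem_Ioi.2 hb) h (diffAt_logGamma ha)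
  have h2 := hc.slope_le_deriv (mem_Ioi.2 ha) (mem_Ioi.2 hb) h (diffAt_logGamma hb)
  exact h1.trans h2

lemma digamma_eq (x : ℝ) (hx : 0 < x) : digamma x = digamma 1 + dser x := by
  obtain ⟨m, hm⟩ := exists_nat_ge x
  set T : ℕ → ℝ := fun n => ∑ k ∈ Finset.range n, 1 / (x + k) with hT
  set H : ℕ → ℝ := fun n => ∑ k ∈ Finset.range n, 1 / ((k : ℝ) + 1) with hH
  have hTH : ∀ n, H n - T n = ∑ k ∈ Finset.range n, dterm k x := by
    intro n
    rw [hT, hH, ← Finset.sum_sub_distrib]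
    exact Finset.sum_congr rfl fun k _ => rfl
  have hlim : Tendsto (fun n => H n - T n) atTop (𝓝 (dser x)) := by
    have := (summable_dterm hx).hasSum.tendsto_sum_nat
    apply this.congr
    intro n
    exact (hTH n).symm
  have hxn : ∀ n : ℕ, digamma (x + n) = digamma x + T n := fun n => digamma_rec_nat hx n
  have hnat : ∀ n : ℕ, digamma ((n : ℝ) + 1) = digamma 1 + H n := by
    intro n
    have := digamma_rec_nat one_pos n
    rw [add_comm (1:ℝ) (n:ℝ)] at this
    rw [this]
    congr 1
    exact Finset.sum_congr rfl fun k _ => by rw [add_comm]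
  -- uniform smallness of harmonic tails
  have hHtail : ∀ n : ℕ, H (n + m) - H (n + 1) ≤ m * (1 / ((n : ℝ) + 1)) := by
    intro n
    rcases le_or_gt (n + m) (n + 1) with h | h
    · have : H (n + m) ≤ H (n + 1) := by
        apply Finset.sum_le_sum_of_subset_of_nonneg (Finset.range_subset_range.2 h)
        intro k _ _; positivity
      have : H (n + m) - H (n + 1) ≤ 0 := by linarith
      refine this.trans (by positivity)
    · have hsub : H (n + m) - H (n + 1) = ∑ k ∈ Finset.Ico (n + 1) (n + m), 1 / ((k : ℝ) + 1) := by
        rw [hH, Finset.sum_Ico_eq_sub _ h.le]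
      rw [hsub]
      have hcard : (Finset.Ico (n + 1) (n + m)).card = m - 1 := by
        rw [Nat.card_Ico]; omega
      calc ∑ k ∈ Finset.Ico (n + 1) (n + m), 1 / ((k : ℝ) + 1)
          ≤ (Finset.Ico (n + 1) (n + m)).card • (1 / ((n : ℝ) + 1)) := by
            apply Finset.sum_le_card_nsmul
            intro k hk
            have hk1 := (Finset.mem_Ico.1 hk).1
            have : (n : ℝ) + 1 ≤ (k : ℝ) + 1 := by
              have : (n : ℝ) ≤ k := by exact_mod_cast Nat.le_of_succ_le hk1
              linarith
            exact one_div_le_one_div_of_le (by positivity) this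
        _ ≤ m * (1 / ((n : ℝ) + 1)) := by
            rw [hcard, nsmul_eq_mul]
            have h1 : ((m - 1 : ℕ) : ℝ) ≤ (m : ℝ) := by
              exact_mod_cast Nat.sub_le m 1
            have h2 : (0:ℝ) ≤ 1 / ((n : ℝ) + 1) := by positivity
            exact mul_le_mul_of_nonneg_right h1 h2
  have hHtail0 : ∀ n : ℕ, 0 ≤ H (n + m) - H (n + 1) := by
    intro n
    rcases le_or_gt (n + 1) (n + m) with h | h
    · have : H (n + 1) ≤ H (n + m) := by
        apply Finset.sum_le_sum_of_subset_of_nonneg (Finset.range_subset_range.2 h)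
        intro k _ _; positivity
      linarith
    · have hmn : m = 0 := by omega
      have hx1 : x ≤ 0 := by
        rw [hmn] at hm; exact_mod_cast hm
      linarith
  have htail_lim : Tendsto (fun n : ℕ => H (n + m) - H (n + 1)) atTop (𝓝 0) := by
    apply squeeze_zero hHtail0 hHtail
    have : Tendsto (fun n : ℕ => 1 / ((n : ℝ) + 1)) atTop (𝓝 0) :=
      tendsto_one_div_add_atTop_nhds_zero_nat
    simpa using this.const_mul (m : ℝ)
  -- lower bound
  have hlow : ∀ n : ℕ, digamma 1 + (H (n + 1) - T (n + 1)) - 1 / ((n : ℝ) + 1) ≤ digamma x := by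
    intro n
    have hmono : digamma ((n : ℝ) + 1) ≤ digamma (x + (n + 1 : ℕ)) := by
      apply digamma_mono (by positivity)
      push_cast; linarith
    rw [hnat n, hxn (n + 1)] at hmono
    have hHsucc : H (n + 1) = H n + 1 / ((n : ℝ) + 1) := by
      rw [hH]; exact Finset.sum_range_succ _ n
    linarith
  -- upper bound
  have hup : ∀ n : ℕ, digamma x ≤ digamma 1 + (H (n + 1) - T (n + 1)) + (H (n + m) - H (n + 1)) := by
    intro n
    have hmono : digamma (x + (n + 1 : ℕ)) ≤ digamma (((n + m : ℕ) : ℝ) + 1) := by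
      apply digamma_mono (by positivity)
      push_cast
      linarith
    rw [hnat (n + m), hxn (n + 1)] at hmono
    linarith
  -- squeeze
  have hlim1 : Tendsto (fun n : ℕ => H (n + 1) - T (n + 1)) atTop (𝓝 (dser x)) :=
    hlim.comp (tendsto_add_atTop_nat 1)
  have hLlim : Tendsto (fun n : ℕ => digamma 1 + (H (n + 1) - T (n + 1)) - 1 / ((n : ℝ) + 1))
      atTop (𝓝 (digamma 1 + dser x)) := by
    have := (hlim1.const_add (digamma 1)).sub tendsto_one_div_add_atTop_nhds_zero_nat
    simpa using this
  have hUlim : Tendsto (fun n : ℕ =>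
      digamma 1 + (H (n + 1) - T (n + 1)) + (H (n + m) - H (n + 1)))
      atTop (𝓝 (digamma 1 + dser x)) := by
    have := (hlim1.const_add (digamma 1)).add htail_lim
    simpa using this
  have h1 : digamma 1 + dser x ≤ digamma x := le_of_tendsto hLlim (Eventually.of_forall hlow)
  have h2 : digamma x ≤ digamma 1 + dser x := ge_of_tendsto hUlim (Eventually.of_forall hup)
  linarith

lemma hasDerivAt_dser {x : ℝ} (hx : 0 < x) :
    HasDerivAt (fun z => ∑' n : ℕ, dterm n z) (S2 x) x := by
  have hx2 : 0 < x / 2 := half_pos hx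
  have key := hasDerivAt_tsum_of_isPreconnected (u := fun n : ℕ => 1 / (x / 2 + n) ^ 2)
    (g := fun n z => dterm n z) (g' := fun n y => 1 / (y + n) ^ 2)
    (summable_S2 hx2) isOpen_Ioi (convex_Ioi (x / 2)).isPreconnected
    (fun n y hy => ?_) (fun n y hy => ?_)
    (mem_Ioi.2 (half_lt_self hx)) (summable_dterm hx) (mem_Ioi.2 (half_lt_self hx))
  · exact key
  · -- derivative of each term
    have hy0 : 0 < y := hx2.trans hy
    have hne : y + (n : ℝ) ≠ 0 := by positivity
    have h1 : HasDerivAt (fun z : ℝ => z + n) 1 y := (hasDerivAt_id y).add_const _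
    have h2 := h1.inv hne
    have h3 := h2.const_sub (1 / ((n : ℝ) + 1))
    have hval : -(-1 / (y + (n:ℝ)) ^ 2) = 1 / (y + n) ^ 2 := by ring
    rw [hval] at h3
    simpa [dterm, one_div] using h3
  · -- bound
    have hy' : x / 2 + (n : ℝ) ≤ y + n := by have := mem_Ioi.1 hy; linarith
    have h0 : (0:ℝ) < x / 2 + n := by positivity
    show |1 / (y + (n:ℝ)) ^ 2| ≤ 1 / (x / 2 + (n:ℝ)) ^ 2
    rw [abs_of_nonneg (by positivity)]
    gcongr

lemma trigamma_eq (x : ℝ) (hx : 0 < x) : trigamma x = S2 x := by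
  have heq : digamma =ᶠ[𝓝 x] fun z => digamma 1 + dser z := by
    filter_upwards [Ioi_mem_nhds hx] with z hz
    exact digamma_eq z hz
  have hD : HasDerivAt (fun z => digamma 1 + dser z) (S2 x) x := by
    unfold dser
    exact (hasDerivAt_dser hx).const_add _
  show deriv digamma x = S2 x
  rw [heq.deriv_eq, hD.deriv]

lemma hasDerivAt_S2 {x : ℝ} (hx : 0 < x) :
    HasDerivAt (fun z : ℝ => ∑' n : ℕ, 1 / (z + n) ^ 2) (-2 * S3 x) x := by
  have hx2 : 0 < x / 2 := half_pos hx
  have key := hasDerivAt_tsum_of_isPreconnected (u := fun n : ℕ => 2 * (1 / (x / 2 + n) ^ 3))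
    (g := fun (n : ℕ) (z : ℝ) => 1 / (z + n) ^ 2) (g' := fun n y => -2 / (y + n) ^ 3)
    ((summable_S3 hx2).mul_left 2) isOpen_Ioi (convex_Ioi (x / 2)).isPreconnected
    (fun n y hy => ?_) (fun n y hy => ?_)
    (mem_Ioi.2 (half_lt_self hx)) (summable_S2 hx) (mem_Ioi.2 (half_lt_self hx))
  · have : (∑' n : ℕ, -2 / (x + n) ^ 3) = -2 * S3 x := by
      unfold S3
      rw [← tsum_mul_left]
      exact tsum_congr fun n => by rw [div_eq_mul_one_div]
    rwa [this] at key
  · have hy0 : 0 < y := hx2.trans hy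
    have hne : y + (n : ℝ) ≠ 0 := by positivity
    have hne2 : (y + (n : ℝ)) ^ 2 ≠ 0 := by positivity
    have h1 : HasDerivAt (fun z : ℝ => z + n) 1 y := (hasDerivAt_id y).add_const _
    have h2 : HasDerivAt (fun z : ℝ => (z + n) ^ 2) (2 * (y + n)) y := by
      simpa using h1.fun_pow 2
    have h3 := h2.fun_inv hne2
    have hval : -(2 * (y + (n:ℝ))) / ((y + (n:ℝ)) ^ 2) ^ 2 = -2 / (y + n) ^ 3 := by
      have hyn : (0:ℝ) < y + n := by positivity
      field_simp
    rw [hval] at h3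
    simpa [one_div] using h3
  · have hy' : x / 2 + (n : ℝ) ≤ y + n := by have := mem_Ioi.1 hy; linarith
    have h0 : (0:ℝ) < x / 2 + n := by positivity
    have hy0 : (0:ℝ) < y + n := h0.trans_le hy'
    show |(-2) / (y + (n:ℝ)) ^ 3| ≤ 2 * (1 / (x / 2 + (n:ℝ)) ^ 3)
    rw [abs_div, abs_of_nonpos (by norm_num : (-2:ℝ) ≤ 0),
      abs_of_nonneg (le_of_lt (pow_pos hy0 3)), neg_neg, div_eq_mul_one_div]
    gcongr

lemma S2_pos {x : ℝ} (hx : 0 < x) : 0 < S2 x :=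
  Summable.tsum_pos (summable_S2 hx) (fun n => by positivity) 0 (by positivity)

lemma tendsto_one_div_shift {x : ℝ} : Tendsto (fun n : ℕ => 1 / (x + (n:ℝ))) atTop (𝓝 0) := by
  have hA : Tendsto (fun n : ℕ => x + (n : ℝ)) atTop atTop :=
    tendsto_atTop_add_const_left atTop x tendsto_natCast_atTop_atTop
  simpa [one_div, Pi.inv_def] using hA.inv_tendsto_atTop

lemma S2_lt {x : ℝ} (hx : 0 < x) : S2 x ≤ 1 / x ^ 2 + 1 / x := by
  have tel : HasSum (fun n : ℕ => 1 / (x + n) - 1 / (x + n + 1)) (1 / x) := by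
    rw [hasSum_iff_tendsto_nat_of_nonneg]
    · have hps : ∀ n : ℕ, ∑ k ∈ Finset.range n, (1 / (x + k) - 1 / (x + k + 1))
          = 1 / x - 1 / (x + n) := by
        intro n
        have h := Finset.sum_range_sub' (f := fun k : ℕ => 1 / (x + k)) n
        push_cast at h
        simpa [add_assoc] using h
      simp_rw [hps]
      simpa using (tendsto_const_nhds (x := 1 / x)).sub (tendsto_one_div_shift (x := x))
    · intro n
      have h1 : (0:ℝ) < x + n := by positivity
      have h2 : x + (n:ℝ) ≤ x + n + 1 := by linarith
      have := one_div_le_one_div_of_le h1 h2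
      linarith
  have hterm : ∀ n : ℕ, 1 / (x + ((n + 1 : ℕ):ℝ)) ^ 2 ≤ 1 / (x + n) - 1 / (x + n + 1) := by
    intro n
    have h1 : (0:ℝ) < x + n := by positivity
    have h2 : (0:ℝ) < x + n + 1 := by positivity
    have key : 1 / (x + (n:ℝ)) - 1 / (x + n + 1) = 1 / ((x + n) * (x + n + 1)) := by
      field_simp
      ring
    rw [key]
    push_cast
    apply one_div_le_one_div_of_le (by positivity)
    nlinarith
  have hsum2 : Summable (fun n : ℕ => 1 / (x + ((n + 1 : ℕ):ℝ)) ^ 2) :=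
    (summable_nat_add_iff 1).2 (summable_S2 hx)
  have hle : ∑' n : ℕ, 1 / (x + ((n + 1 : ℕ):ℝ)) ^ 2 ≤ 1 / x := by
    rw [← tel.tsum_eq]
    exact Summable.tsum_le_tsum hterm hsum2 tel.summable
  have hsplit : S2 x = 1 / (x + ((0:ℕ):ℝ)) ^ 2 + ∑' n : ℕ, 1 / (x + ((n + 1 : ℕ):ℝ)) ^ 2 := by
    unfold S2
    exact Summable.tsum_eq_zero_add (summable_S2 hx)
  rw [hsplit]
  have h00 : 1 / (x + ((0:ℕ):ℝ)) ^ 2 = 1 / x ^ 2 := by norm_num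
  rw [h00]
  linarith

lemma S3_gt {x : ℝ} (hx : 0 < x) : 1 / (2 * x ^ 2) + 1 / (2 * x ^ 3) < S3 x := by
  set φ : ℝ → ℝ := fun s => 1 / (2 * s ^ 2) + 1 / (2 * s ^ 3) with hφ
  have φ_anti : ∀ s : ℝ, 0 < s → φ (s + 1) ≤ φ s := by
    intro s hs
    have h1 : (0:ℝ) < s + 1 := by linarith
    simp only [hφ]
    gcongr <;> linarith
  have φ_step : ∀ s : ℝ, 0 < s → φ s - φ (s + 1) < 1 / s ^ 3 := by
    intro s hs
    have h1 : (0:ℝ) < s + 1 := by linarith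
    have key : 1 / s ^ 3 - (φ s - φ (s + 1)) = (2 * s + 1) / (2 * s ^ 3 * (s + 1) ^ 3) := by
      simp only [hφ]
      field_simp
      ring
    nlinarith [div_pos (by linarith : (0:ℝ) < 2 * s + 1)
      (by positivity : (0:ℝ) < 2 * s ^ 3 * (s + 1) ^ 3), key]
  have tel : HasSum (fun n : ℕ => φ (x + n) - φ (x + n + 1)) (φ x) := by
    rw [hasSum_iff_tendsto_nat_of_nonneg]
    · have hps : ∀ n : ℕ, ∑ k ∈ Finset.range n, (φ (x + k) - φ (x + k + 1))
          = φ x - φ (x + n) := by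
        intro n
        have h := Finset.sum_range_sub' (f := fun k : ℕ => φ (x + k)) n
        push_cast at h
        simpa [add_assoc] using h
      simp_rw [hps]
      have hA : Tendsto (fun n : ℕ => x + (n : ℝ)) atTop atTop :=
        tendsto_atTop_add_const_left atTop x tendsto_natCast_atTop_atTop
      have h2 : Tendsto (fun n : ℕ => (2 * (x + (n:ℝ)) ^ 2)⁻¹) atTop (𝓝 0) := by
        apply Tendsto.inv_tendsto_atTop
        exact ((tendsto_pow_atTop (two_ne_zero)).comp hA).const_mul_atTop
          (by norm_num : (0:ℝ) < 2)
      have h3 : Tendsto (fun n : ℕ => (2 * (x + (n:ℝ)) ^ 3)⁻¹) atTop (𝓝 0) := by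
        apply Tendsto.inv_tendsto_atTop
        exact ((tendsto_pow_atTop (three_ne_zero)).comp hA).const_mul_atTop
          (by norm_num : (0:ℝ) < 2)
      have hφ0 : Tendsto (fun n : ℕ => φ (x + (n:ℝ))) atTop (𝓝 0) := by
        have := h2.add h3
        simp only [hφ, one_div]
        simpa using this
      simpa using (tendsto_const_nhds (x := φ x)).sub hφ0
    · intro n
      have hpos : (0:ℝ) < x + n := by positivity
      linarith [φ_anti (x + n) hpos]
  have hstrict : φ x < S3 x := by
    unfold S3
    rw [← tel.tsum_eq]
    apply Summable.tsum_lt_tsum_of_nonneg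
    · intro n
      have hpos : (0:ℝ) < x + n := by positivity
      linarith [φ_anti (x + n) hpos]
    · intro n
      have hpos : (0:ℝ) < x + n := by positivity
      linarith [φ_step (x + n) hpos]
    · show φ (x + ((0:ℕ):ℝ)) - φ (x + ((0:ℕ):ℝ) + 1) < 1 / (x + ((0:ℕ):ℝ)) ^ 3
      push_cast
      simpa using φ_step x hx
    · exact summable_S3 hx
  simpa [hφ] using hstrict

lemma mul_S2_strictAnti {a b : ℝ} (ha : 0 < a) (hab : a < b) : b * S2 b < a * S2 a := by
  have hprod : ∀ t : ℝ, 0 < t →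
      HasDerivAt (fun z : ℝ => z * ∑' n : ℕ, 1 / (z + n) ^ 2)
        (1 * (∑' n : ℕ, 1 / (t + n) ^ 2) + t * (-2 * S3 t)) t := by
    intro t ht
    exact (hasDerivAt_id t).mul (hasDerivAt_S2 ht)
  have key := strictAntiOn_of_deriv_neg (convex_Icc a b)
    (f := fun z : ℝ => z * ∑' n : ℕ, 1 / (z + n) ^ 2) ?_ ?_ (left_mem_Icc.2 hab.le)
    (right_mem_Icc.2 hab.le) hab
  · unfold S2
    exact key
  · intro t ht
    have ht0 : 0 < t := ha.trans_le ht.1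
    exact (hprod t ht0).continuousAt.continuousWithinAt
  · intro t ht
    rw [interior_Icc] at ht
    have ht0 : 0 < t := ha.trans ht.1
    rw [(hprod t ht0).deriv]
    have h1 : S2 t ≤ 1 / t ^ 2 + 1 / t := S2_lt ht0
    have h2 : 1 / (2 * t ^ 2) + 1 / (2 * t ^ 3) < S3 t := S3_gt ht0
    have h3 : (∑' n : ℕ, 1 / (t + n) ^ 2) = S2 t := rfl
    rw [h3]
    have h4 : 1 / t ^ 2 + 1 / t = 2 * t * (1 / (2 * t ^ 2) + 1 / (2 * t ^ 3)) := by
      field_simp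
      ring
    nlinarith

end TrigammaAux

theorem one_div_trigamma_superadditive (x y : ℝ) (hx : 0 < x) (hy : 0 < y) :
    1 / trigamma (x + y) > 1 / trigamma x + 1 / trigamma y ∧
    trigamma (x + y) * (1 / trigamma x + 1 / trigamma y) < 1 := by
  open TrigammaAux in
  have hs : 0 < x + y := by linarith
  have ex : trigamma x = S2 x := trigamma_eq x hx
  have ey : trigamma y = S2 y := trigamma_eq y hy
  have es : trigamma (x + y) = S2 (x + y) := trigamma_eq _ hs
  have px : 0 < trigamma x := ex ▸ S2_pos hx
  have py : 0 < trigamma y := ey ▸ S2_pos hy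
  have ps : 0 < trigamma (x + y) := es ▸ S2_pos hs
  have k1 : (x + y) * trigamma (x + y) < x * trigamma x := by
    rw [ex, es]; exact mul_S2_strictAnti hx (by linarith)
  have k2 : (x + y) * trigamma (x + y) < y * trigamma y := by
    rw [ey, es]; exact mul_S2_strictAnti hy (by linarith)
  have hP : 0 < (x + y) * trigamma (x + y) := by positivity
  have hx1 : 1 / trigamma x < x / ((x + y) * trigamma (x + y)) := by
    have : 1 / trigamma x = x / (x * trigamma x) := by
      field_simp
    rw [this]
    exact div_lt_div_of_pos_left hx hP k1
  have hy1 : 1 / trigamma y < y / ((x + y) * trigamma (x + y)) := by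
    have : 1 / trigamma y = y / (y * trigamma y) := by
      field_simp
    rw [this]
    exact div_lt_div_of_pos_left hy hP k2
  have hsum : 1 / trigamma x + 1 / trigamma y < 1 / trigamma (x + y) := by
    have hadd : x / ((x + y) * trigamma (x + y)) + y / ((x + y) * trigamma (x + y))
        = 1 / trigamma (x + y) := by
      rw [← add_div]
      field_simp
    linarith
  refine ⟨hsum, ?_⟩
  calc trigamma (x + y) * (1 / trigamma x + 1 / trigamma y)
      < trigamma (x + y) * (1 / trigamma (x + y)) := by
        exact mul_lt_mul_of_pos_left hsum ps
    _ = 1 := by field_simp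
end

section
/- With $g_i, h_j$ as in the fixed-point map of the beta graph ML iteration, the map $f = (g,h)$ is monotone: if $a_i \ge x_i > 0$ and $b_j \ge y_j > 0$ for all $i, j$, then $g_i(a,b) \ge g_i(x,y)$ and $h_j(a,b) \ge h_j(x,y)$ for all $i, j$. -/
open Finset

/-- The inverse of the digamma function on `(0,∞)`. -/
noncomputable def digammaInv (y : ℝ) : ℝ := Function.invFunOn digamma (Set.Ioi 0) y

private lemma lgDiff : ∀ x ∈ Set.Ioi (0:ℝ), DifferentiableAt ℝ (fun y => Real.log (Real.Gamma y)) x := by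
  intro x hx
  have hx' : (0:ℝ) < x := hx
  refine (Real.differentiableAt_Gamma (fun m => ?_)).log (Real.Gamma_pos_of_pos hx').ne'
  have : (0:ℝ) ≤ m := Nat.cast_nonneg m
  intro hc
  rw [hc] at hx'
  linarith

private lemma digamma_monotoneOn : MonotoneOn digamma (Set.Ioi 0) :=
  Real.convexOn_log_Gamma.monotoneOn_deriv lgDiff

private lemma lg_rec {x : ℝ} (hx : 0 < x) :
    Real.log (Real.Gamma (x + 1)) = Real.log (Real.Gamma x) + Real.log x := by
  rw [Real.Gamma_add_one hx.ne', Real.log_mul hx.ne' (Real.Gamma_pos_of_pos hx).ne', add_comm]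

private lemma digamma_le_log {x : ℝ} (hx : 0 < x) : digamma x ≤ Real.log x := by
  have := Real.convexOn_log_Gamma.deriv_le_slope (Set.mem_Ioi.mpr hx)
    (Set.mem_Ioi.mpr (by linarith : (0:ℝ) < x + 1)) (by linarith) (lgDiff x hx)
  simp only [Function.comp_def, slope_def_field, show x + 1 - x = (1:ℝ) by ring, div_one, lg_rec hx] at this
  simp only [digamma]
  linarith

private lemma log_le_digamma {x : ℝ} (hx : 0 < x) : Real.log x ≤ digamma (x + 1) := by
  have := Real.convexOn_log_Gamma.slope_le_deriv (Set.mem_Ioi.mpr hx)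
    (Set.mem_Ioi.mpr (by linarith : (0:ℝ) < x + 1)) (by linarith)
    (lgDiff _ (by simp; linarith))
  simp only [Function.comp_def, slope_def_field, show x + 1 - x = (1:ℝ) by ring, div_one, lg_rec hx] at this
  simp only [digamma]
  linarith

private lemma digamma_surj (v : ℝ) : ∃ u ∈ Set.Ioi (0:ℝ), digamma u = v := by
  have hOrd : Set.OrdConnected (digamma '' Set.Ioi 0) :=
    Set.ordConnected_Ioi.image_deriv lgDiff
  set p : ℝ := min (Real.exp v) 1 with hp
  have hp0 : 0 < p := lt_min (Real.exp_pos v) one_pos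
  have hlow : digamma p ≤ v := by
    calc digamma p ≤ Real.log p := digamma_le_log hp0
      _ ≤ Real.log (Real.exp v) := Real.log_le_log hp0 (min_le_left _ _)
      _ = v := Real.log_exp v
  set q : ℝ := max (Real.exp v) 1 with hq
  have hq0 : 0 < q := lt_of_lt_of_le one_pos (le_max_right _ _)
  have hhigh : v ≤ digamma (q + 1) := by
    calc v = Real.log (Real.exp v) := (Real.log_exp v).symm
      _ ≤ Real.log q := Real.log_le_log (Real.exp_pos v) (le_max_left _ _)
      _ ≤ digamma (q + 1) := log_le_digamma hq0
  have h1 : digamma p ∈ digamma '' Set.Ioi 0 := ⟨p, hp0, rfl⟩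
  have h2 : digamma (q + 1) ∈ digamma '' Set.Ioi 0 := ⟨q + 1, by simp; linarith, rfl⟩
  have := hOrd.out h1 h2 ⟨hlow, hhigh⟩
  obtain ⟨u, hu, huv⟩ := this
  exact ⟨u, hu, huv⟩

private lemma digammaInv_mono : Monotone digammaInv := by
  intro v w hvw
  have hv := digamma_surj v
  have hw := digamma_surj w
  have hvm : digammaInv v ∈ Set.Ioi (0:ℝ) := Function.invFunOn_mem hv
  have hwm : digammaInv w ∈ Set.Ioi (0:ℝ) := Function.invFunOn_mem hw
  have hve : digamma (digammaInv v) = v := Function.invFunOn_eq hv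
  have hwe : digamma (digammaInv w) = w := Function.invFunOn_eq hw
  by_contra hlt
  push_neg at hlt
  have : w ≤ v := by
    rw [← hve, ← hwe]
    exact digamma_monotoneOn hwm hvm hlt.le
  have hvw' : v = w := le_antisymm hvw this
  rw [hvw'] at hlt
  exact lt_irrefl _ hlt

theorem fixed_point_map_monotone (n : ℕ) (hn : 2 ≤ n) (R C : Fin n → ℝ)
    (g h : (Fin n → ℝ) → (Fin n → ℝ) → Fin n → ℝ)
    (hg : ∀ a b i, g a b i =
      digammaInv (R i / (n - 1) + (1 / (n - 1)) * ∑ j ∈ univ \ {i}, digamma (a i + b j)))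
    (hh : ∀ a b j, h a b j =
      digammaInv (C j / (n - 1) + (1 / (n - 1)) * ∑ i ∈ univ \ {j}, digamma (a i + b j)))
    (a b x y : Fin n → ℝ)
    (hx : ∀ i, 0 < x i) (hy : ∀ j, 0 < y j)
    (hax : ∀ i, x i ≤ a i) (hby : ∀ j, y j ≤ b j) :
    (∀ i, g x y i ≤ g a b i) ∧ (∀ j, h x y j ≤ h a b j) := by
  have hn1 : (0:ℝ) ≤ 1 / ((n:ℝ) - 1) := by
    have h2 : (2:ℝ) ≤ n := by exact_mod_cast hn
    have : (0:ℝ) < (n:ℝ) - 1 := by linarith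
    positivity
  have key : ∀ i j : Fin n, digamma (x i + y j) ≤ digamma (a i + b j) := by
    intro i j
    exact digamma_monotoneOn (Set.mem_Ioi.mpr (by linarith [hx i, hy j]))
      (Set.mem_Ioi.mpr (by linarith [hx i, hy j, hax i, hby j]))
      (by linarith [hax i, hby j])
  constructor
  · intro i
    rw [hg, hg]
    apply digammaInv_mono
    have : ∑ j ∈ univ \ {i}, digamma (x i + y j) ≤ ∑ j ∈ univ \ {i}, digamma (a i + b j) :=
      Finset.sum_le_sum fun j _ => key i j
    have := mul_le_mul_of_nonneg_left this hn1
    linarith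
  · intro j
    rw [hh, hh]
    apply digammaInv_mono
    have : ∑ i ∈ univ \ {j}, digamma (x i + y j) ≤ ∑ i ∈ univ \ {j}, digamma (a i + b j) :=
      Finset.sum_le_sum fun i _ => key i j
    have := mul_le_mul_of_nonneg_left this hn1
    linarith
end
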